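/- arXiv:2605.22795 — 6 statements merged into one kernel-verified Lean document; each statement's English description precedes it below -/
import Mathlib

section
/- I.i.d. local occupancy (high-probability bound of Proposition 5.2): if Y₁,…,Y_N are i.i.d. from μ with N ≥ 2 and μ(B(y, r h)) ≥ p₀ h^d for μ-a.e. y, then the probability that some i satisfies M_i(Y;h) < (p₀/4) N h^d is at most N · exp( −(p₀/16) N h^d ), where M_i(Y;h) := #{ j ∈ {1,…,N} : ‖Y_j − Y_i‖ ≤ r h } counts j = i. -/
open MeasureTheory Finset ProbabilityTheory
open scoped ENNReal

lemma lintegral_pi_pow {E : Type*} [MeasurableSpace E] (μ : Measure E) [IsProbabilityMeasure μ] :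
    ∀ (n : ℕ) (g : E → ℝ≥0∞), Measurable g →
      ∫⁻ z : Fin n → E, ∏ j, g (z j) ∂Measure.pi (fun _ => μ) = (∫⁻ x, g x ∂μ) ^ n := by
  intro n
  induction n with
  | zero => intro g hg; simp
  | succ n ih =>
    intro g hg
    have hF : Measurable fun z : Fin (n + 1) → E => ∏ j, g (z j) :=
      Finset.measurable_prod _ fun j _ => hg.comp (measurable_pi_apply j)
    have mp := (measurePreserving_piFinSuccAbove (fun _ : Fin (n + 1) => μ) 0).symm _
    have key : ∫⁻ z : Fin (n + 1) → E, ∏ j, g (z j) ∂Measure.pi (fun _ => μ)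
        = ∫⁻ p : E × (Fin n → E),
            (fun z : Fin (n + 1) → E => ∏ j, g (z j))
              ((MeasurableEquiv.piFinSuccAbove (fun _ => E) 0).symm p)
            ∂(μ.prod (Measure.pi fun _ => μ)) := (mp.lintegral_comp hF).symm
    rw [key]
    have : ∀ p : E × (Fin n → E),
        (∏ j, g (((MeasurableEquiv.piFinSuccAbove (fun _ => E) 0).symm p) j))
          = g p.1 * ∏ k, g (p.2 k) := by
      intro p
      rw [Fin.prod_univ_succ]
      simp [MeasurableEquiv.piFinSuccAbove, Fin.insertNthEquiv]
    simp only [this]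
    have hG : Measurable fun z : Fin n → E => ∏ k, g (z k) :=
      Finset.measurable_prod _ fun k _ => hg.comp (measurable_pi_apply k)
    rw [lintegral_prod_mul (f := g) (g := fun z : Fin n → E => ∏ k, g (z k))
      hg.aemeasurable hG.aemeasurable, ih g hg, pow_succ]
    ring

lemma map_eq_pi' {Ω : Type*} [MeasurableSpace Ω] (P : Measure Ω) [IsProbabilityMeasure P]
    {E : Type*} [MeasurableSpace E] (μ : Measure E) [IsProbabilityMeasure μ]
    {N : ℕ} (Y : Fin N → Ω → E) (hmeas : ∀ i, Measurable (Y i))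
    (hindep : iIndepFun Y P)
    (hid : ∀ i, Measure.map (Y i) P = μ) :
    Measure.map (fun ω j => Y j ω) P = Measure.pi (fun _ => μ) := by
  refine (Measure.pi_eq (μ := fun _ : Fin N => μ) fun s hs => ?_).symm
  rw [Measure.map_apply (measurable_pi_lambda _ hmeas) (MeasurableSet.univ_pi hs)]
  have hpre : (fun ω j => Y j ω) ⁻¹' Set.pi Set.univ s = ⋂ j ∈ Finset.univ, Y j ⁻¹' s j := by
    ext ω; simp [Set.mem_pi]
  rw [hpre, hindep.measure_inter_preimage_eq_mul Finset.univ (fun j _ => hs j)]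
  exact Finset.prod_congr rfl fun j _ => by rw [← hid j, Measure.map_apply (hmeas j) (hs j)]

lemma real_ineq' (t : ℝ) (n : ℕ) (ht0 : 0 < t) (ht1 : t ≤ 1) (hn : 1 ≤ n) :
    Real.exp (Real.log 2 * (t * (n + 1) / 4)) * (2⁻¹ * (1 - t / 2) ^ n)
      ≤ Real.exp (-(t * (n + 1) / 16)) := by
  have hn1 : (1 : ℝ) ≤ n := by exact_mod_cast hn
  have h1 : (1 - t / 2) ^ n ≤ Real.exp (-(t / 2)) ^ n := by
    refine pow_le_pow_left₀ (by linarith) ?_ n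
    have := Real.add_one_le_exp (-(t / 2)); linarith
  have h2 : Real.exp (-(t / 2)) ^ n = Real.exp (-(t / 2) * n) := by
    rw [← Real.exp_nat_mul]; ring_nf
  have hlog : Real.log 2 < 0.6931471808 := Real.log_two_lt_d9
  have key : ((n : ℝ) + 1) * (Real.log 2 / 4 + 1 / 16) ≤ n / 2 := by nlinarith
  have hexp : Real.log 2 * (t * (n + 1) / 4) + (-(t / 2) * n) ≤ -(t * (n + 1) / 16) := by
    nlinarith [mul_le_mul_of_nonneg_left key ht0.le]
  calc Real.exp (Real.log 2 * (t * (n + 1) / 4)) * (2⁻¹ * (1 - t / 2) ^ n)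
      ≤ Real.exp (Real.log 2 * (t * (n + 1) / 4)) * (1 * Real.exp (-(t / 2) * n)) := by
        apply mul_le_mul_of_nonneg_left _ (Real.exp_nonneg _)
        rw [← h2]
        apply mul_le_mul (by norm_num) h1 (pow_nonneg (by linarith) n) (by norm_num)
    _ = Real.exp (Real.log 2 * (t * (n + 1) / 4) + (-(t / 2) * n)) := by
        rw [one_mul, ← Real.exp_add]
    _ ≤ Real.exp (-(t * (n + 1) / 16)) := Real.exp_le_exp.mpr hexp

lemma single_occupancy_bound {E : Type*} [NormedAddCommGroup E] [MeasurableSpace E]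
    [BorelSpace E] [SecondCountableTopology E]
    {Ω : Type*} [MeasurableSpace Ω] (P : Measure Ω) [IsProbabilityMeasure P]
    (μ : Measure E) [IsProbabilityMeasure μ] (t s : ℝ) (ht0 : 0 < t) (ht1 : t ≤ 1) (hs : 0 < s)
    {n : ℕ} (hn : 1 ≤ n) (Y : Fin (n + 1) → Ω → E) (hmeas : ∀ i, Measurable (Y i))
    (hindep : iIndepFun Y P)
    (hid : ∀ i, Measure.map (Y i) P = μ)
    (hμ : ∀ᵐ y ∂μ, ENNReal.ofReal t ≤ μ (Metric.closedBall y s)) (i : Fin (n + 1)) :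
    P {ω | ((univ.filter fun j => ‖Y j ω - Y i ω‖ ≤ s).card : ℝ) < t * (n + 1) / 4}
      ≤ ENNReal.ofReal (Real.exp (-(t * (n + 1) / 16))) := by
  set c : ℝ := t * (n + 1) / 4 with hc
  set g : E → E → ℝ≥0∞ := fun y x => if ‖x - y‖ ≤ s then (2⁻¹ : ℝ≥0∞) else 1 with hgdef
  set F : (Fin (n + 1) → E) → ℝ≥0∞ := fun x => ∏ j, g (x i) (x j) with hFdef
  set G : Ω → ℝ≥0∞ := fun ω => F (fun j => Y j ω) with hGdef
  set a : ℝ≥0∞ := ENNReal.ofReal (Real.exp (-(Real.log 2 * c))) with ha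
  have hgm : ∀ j : Fin (n + 1), Measurable fun x : Fin (n + 1) → E => g (x i) (x j) := by
    intro j
    have hset : MeasurableSet {x : Fin (n + 1) → E | ‖x j - x i‖ ≤ s} :=
      measurableSet_le (measurable_norm.comp
        ((measurable_pi_apply j).sub (measurable_pi_apply i))) measurable_const
    exact Measurable.ite hset measurable_const measurable_const
  have hF : Measurable F := Finset.measurable_prod _ fun j _ => hgm j
  have hG : Measurable G := hF.comp (measurable_pi_lambda _ hmeas)
  have hlog2 : (0 : ℝ) ≤ Real.log 2 := Real.log_nonneg one_le_two
  have h2inv : (2⁻¹ : ℝ≥0∞) = ENNReal.ofReal (2⁻¹ : ℝ) := by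
    rw [show ((2 : ℝ≥0∞)) = ENNReal.ofReal (2 : ℝ) by simp, ENNReal.ofReal_inv_of_pos two_pos]
  have hpow : ∀ m : ℕ, (2⁻¹ : ℝ≥0∞) ^ m = ENNReal.ofReal (Real.exp (-(Real.log 2 * m))) := by
    intro m
    have h₁ : Real.exp (-(Real.log 2 * m)) = (2⁻¹ : ℝ) ^ m := by
      rw [show -(Real.log 2 * m) = (m : ℝ) * (-Real.log 2) by ring, Real.exp_nat_mul,
        Real.exp_neg, Real.exp_log two_pos]
    rw [h₁, ENNReal.ofReal_pow (by norm_num), ← h2inv]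
  -- event inclusion
  have hsub : {ω | ((univ.filter fun j => ‖Y j ω - Y i ω‖ ≤ s).card : ℝ) < c}
      ⊆ {ω | a ≤ G ω} := by
    intro ω hω
    have hGm : G ω = (2⁻¹ : ℝ≥0∞) ^ (univ.filter fun j => ‖Y j ω - Y i ω‖ ≤ s).card := by
      show (∏ j, if ‖Y j ω - Y i ω‖ ≤ s then (2⁻¹ : ℝ≥0∞) else 1) = _
      rw [Finset.prod_ite, Finset.prod_const, Finset.prod_const_one, mul_one]
    have hm : ((univ.filter fun j => ‖Y j ω - Y i ω‖ ≤ s).card : ℝ) ≤ c := le_of_lt hω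
    show a ≤ G ω
    rw [hGm, hpow]
    exact ENNReal.ofReal_le_ofReal (Real.exp_le_exp.mpr (by nlinarith))
  have ha0 : a ≠ 0 := ne_of_gt (ENNReal.ofReal_pos.mpr (Real.exp_pos _))
  have hatop : a ≠ ∞ := ENNReal.ofReal_ne_top
  have step2 : P {ω | ((univ.filter fun j => ‖Y j ω - Y i ω‖ ≤ s).card : ℝ) < c}
      ≤ a⁻¹ * ∫⁻ ω, G ω ∂P := by
    calc P {ω | ((univ.filter fun j => ‖Y j ω - Y i ω‖ ≤ s).card : ℝ) < c}
        ≤ P {ω | a ≤ G ω} := measure_mono hsub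
      _ = a⁻¹ * (a * P {ω | a ≤ G ω}) := by
          rw [← mul_assoc, ENNReal.inv_mul_cancel ha0 hatop, one_mul]
      _ ≤ a⁻¹ * ∫⁻ ω, G ω ∂P :=
          mul_le_mul_right (mul_meas_ge_le_lintegral₀ hG.aemeasurable a) _
  -- compute the integral
  have hmap := map_eq_pi' P μ Y hmeas hindep hid
  have hvec : Measurable fun ω j => Y j ω := measurable_pi_lambda _ hmeas
  have hint1 : ∫⁻ ω, G ω ∂P = ∫⁻ x, F x ∂Measure.pi (fun _ => μ) := by
    rw [← hmap, lintegral_map hF hvec]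
  have mp := (measurePreserving_piFinSuccAbove (fun _ : Fin (n + 1) => μ) i).symm
    (MeasurableEquiv.piFinSuccAbove (fun _ => E) i)
  have hint2 : ∫⁻ x, F x ∂(Measure.pi fun _ => μ)
      = ∫⁻ p : E × (Fin n → E), F ((MeasurableEquiv.piFinSuccAbove (fun _ => E) i).symm p)
          ∂(μ.prod (Measure.pi fun _ => μ)) := (mp.lintegral_comp hF).symm
  have hFsymm : ∀ p : E × (Fin n → E),
      F ((MeasurableEquiv.piFinSuccAbove (fun _ => E) i).symm p)
        = 2⁻¹ * ∏ k, g p.1 (p.2 k) := by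
    intro p
    rw [MeasurableEquiv.piFinSuccAbove_symm_apply]
    simp only [hFdef, Fin.insertNthEquiv, Equiv.coe_fn_mk]
    rw [Fin.prod_univ_succAbove _ i]
    simp only [Fin.insertNth_apply_same, Fin.insertNth_apply_succAbove]
    congr 1
    simp [hgdef, sub_self, norm_zero, hs.le]
  have hgym : ∀ y : E, Measurable (g y) := by
    intro y
    have : MeasurableSet {x : E | ‖x - y‖ ≤ s} :=
      measurableSet_le (measurable_norm.comp (measurable_id.sub measurable_const))
        measurable_const
    exact Measurable.ite this measurable_const measurable_const
  have hprodmeas : Measurable fun p : E × (Fin n → E) => 2⁻¹ * ∏ k, g p.1 (p.2 k) := by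
    refine Measurable.const_mul (Finset.measurable_prod _ fun k _ => ?_) _
    have hm1 : Measurable fun p : E × (Fin n → E) => ‖p.2 k - p.1‖ := by fun_prop
    have hset : MeasurableSet {p : E × (Fin n → E) | ‖p.2 k - p.1‖ ≤ s} :=
      measurableSet_le hm1 measurable_const
    exact Measurable.ite hset measurable_const measurable_const
  have hint3 : ∫⁻ p : E × (Fin n → E), 2⁻¹ * (∏ k, g p.1 (p.2 k))
        ∂(μ.prod (Measure.pi fun _ => μ))
      = ∫⁻ y, 2⁻¹ * (∫⁻ x, g y x ∂μ) ^ n ∂μ := by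
    rw [lintegral_prod _ hprodmeas.aemeasurable]
    refine lintegral_congr fun y => ?_
    have hq : Measurable fun z : Fin n → E => ∏ k, g y (z k) :=
      Finset.measurable_prod _ fun k _ => (hgym y).comp (measurable_pi_apply k)
    rw [lintegral_const_mul (2⁻¹ : ℝ≥0∞) hq, lintegral_pi_pow μ n (g y) (hgym y)]
  -- a.e. bound of the inner integral
  have hbound : ∀ᵐ y ∂μ, ∫⁻ x, g y x ∂μ ≤ ENNReal.ofReal (1 - t / 2) := by
    filter_upwards [hμ] with y hy
    have hBm : MeasurableSet (Metric.closedBall y s) := measurableSet_closedBall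
    have hgeq : g y = fun x => 2⁻¹ + (Metric.closedBall y s)ᶜ.indicator
        (fun _ => (2⁻¹ : ℝ≥0∞)) x := by
      funext x
      have hmem : x ∈ Metric.closedBall y s ↔ ‖x - y‖ ≤ s := by
        rw [Metric.mem_closedBall, dist_eq_norm]
      by_cases hx : ‖x - y‖ ≤ s
      · simp [hgdef, hx, Set.indicator_of_notMem, hmem.mpr hx]
      · have : x ∈ (Metric.closedBall y s)ᶜ := by simp [hmem, hx]
        rw [Set.indicator_of_mem this]
        simp only [hgdef, hx, if_false]
        rw [← two_mul, ENNReal.mul_inv_cancel (by norm_num) (by norm_num)]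
    rw [hgeq, lintegral_add_left measurable_const, lintegral_const, measure_univ, mul_one,
      lintegral_indicator hBm.compl _, setLIntegral_const]
    have h1 : μ (Metric.closedBall y s)ᶜ ≤ ENNReal.ofReal (1 - t) := by
      rw [measure_compl hBm (measure_ne_top μ _), measure_univ]
      calc (1 : ℝ≥0∞) - μ (Metric.closedBall y s) ≤ 1 - ENNReal.ofReal t :=
            tsub_le_tsub_left hy 1
        _ = ENNReal.ofReal (1 - t) := by
            rw [ENNReal.ofReal_sub _ ht0.le, ENNReal.ofReal_one]
    calc (2⁻¹ : ℝ≥0∞) + 2⁻¹ * μ (Metric.closedBall y s)ᶜ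
        ≤ 2⁻¹ + 2⁻¹ * ENNReal.ofReal (1 - t) := add_le_add_right (mul_le_mul_right h1 _) _
      _ = ENNReal.ofReal (1 - t / 2) := by
          rw [h2inv, ← ENNReal.ofReal_mul (by norm_num),
            ← ENNReal.ofReal_add (by norm_num) (by nlinarith)]
          congr 1; ring
  -- combine
  have hfinal : ∫⁻ ω, G ω ∂P ≤ 2⁻¹ * ENNReal.ofReal (1 - t / 2) ^ n := by
    rw [hint1, hint2]
    simp only [hFsymm]
    rw [hint3]
    calc ∫⁻ y, 2⁻¹ * (∫⁻ x, g y x ∂μ) ^ n ∂μ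
        ≤ ∫⁻ _, 2⁻¹ * ENNReal.ofReal (1 - t / 2) ^ n ∂μ := by
          refine lintegral_mono_ae ?_
          filter_upwards [hbound] with y hy
          exact mul_le_mul_right (pow_le_pow_left' hy n) _
      _ = 2⁻¹ * ENNReal.ofReal (1 - t / 2) ^ n := by
          rw [lintegral_const, measure_univ, mul_one]
  have hainv : a⁻¹ = ENNReal.ofReal (Real.exp (Real.log 2 * c)) := by
    rw [ha, Real.exp_neg, ENNReal.ofReal_inv_of_pos (Real.exp_pos _), inv_inv]
  calc P {ω | ((univ.filter fun j => ‖Y j ω - Y i ω‖ ≤ s).card : ℝ) < c}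
      ≤ a⁻¹ * ∫⁻ ω, G ω ∂P := step2
    _ ≤ a⁻¹ * (2⁻¹ * ENNReal.ofReal (1 - t / 2) ^ n) := mul_le_mul_right hfinal _
    _ = ENNReal.ofReal (Real.exp (Real.log 2 * c) * (2⁻¹ * (1 - t / 2) ^ n)) := by
        rw [hainv, h2inv, ← ENNReal.ofReal_pow (by linarith), ← ENNReal.ofReal_mul (by norm_num),
          ← ENNReal.ofReal_mul (Real.exp_nonneg _)]
    _ ≤ ENNReal.ofReal (Real.exp (-(t * (n + 1) / 16))) :=
        ENNReal.ofReal_le_ofReal (real_ineq' t n ht0 ht1 hn)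

/-- I.i.d. local occupancy (Proposition 5.2): if `Y₁,…,Y_N` are i.i.d. from `μ`
with `μ(B(y, rh)) ≥ p₀ h^d` for `μ`-a.e. `y` and `N ≥ 2`, then the probability
that some particle has fewer than `(p₀/4) N h^d` neighbors within radius `rh`
is at most `N exp(−(p₀/16) N h^d)`. -/
theorem iid_local_occupancy {d : ℕ} (h r p₀ : ℝ)
    (hh : 0 < h) (hr : 0 < r) (hp₀ : 0 < p₀)
    {Ω : Type*} [MeasurableSpace Ω] (P : Measure Ω) [IsProbabilityMeasure P]
    (μ : Measure (EuclideanSpace ℝ (Fin d))) [IsProbabilityMeasure μ]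
    (N : ℕ) (hN : 2 ≤ N) (Y : Fin N → Ω → EuclideanSpace ℝ (Fin d))
    (hmeas : ∀ i, Measurable (Y i))
    (hindep : iIndepFun Y P)
    (hid : ∀ i, Measure.map (Y i) P = μ)
    (hμ : ∀ᵐ y ∂μ, p₀ * h ^ d ≤ (μ (Metric.closedBall y (r * h))).toReal) :
    P {ω | ∃ i, ((univ.filter fun j => ‖Y j ω - Y i ω‖ ≤ r * h).card : ℝ) <
        p₀ / 4 * N * h ^ d}
      ≤ ENNReal.ofReal ((N : ℝ) * Real.exp (-(p₀ / 16) * N * h ^ d)) := by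
  obtain ⟨n, rfl⟩ : ∃ n, N = n + 1 := ⟨N - 1, by omega⟩
  have hn : 1 ≤ n := by omega
  set t : ℝ := p₀ * h ^ d with htdef
  have ht0 : 0 < t := by positivity
  have hne : μ ≠ 0 := IsProbabilityMeasure.ne_zero μ
  have : (MeasureTheory.ae μ).NeBot := ae_neBot.mpr hne
  obtain ⟨y₀, hy₀⟩ := hμ.exists
  have ht1 : t ≤ 1 := by
    refine le_trans hy₀ ?_
    have h1 : μ (Metric.closedBall y₀ (r * h)) ≤ 1 := prob_le_one
    calc (μ (Metric.closedBall y₀ (r * h))).toReal ≤ (1 : ℝ≥0∞).toReal :=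
          ENNReal.toReal_mono (by simp) h1
      _ = 1 := ENNReal.toReal_one
  have hμ' : ∀ᵐ y ∂μ, ENNReal.ofReal t ≤ μ (Metric.closedBall y (r * h)) := by
    filter_upwards [hμ] with y hy
    exact ENNReal.ofReal_le_of_le_toReal hy
  have hs : 0 < r * h := mul_pos hr hh
  have hceq : p₀ / 4 * ((n + 1 : ℕ) : ℝ) * h ^ d = t * ((n : ℝ) + 1) / 4 := by
    push_cast; ring
  have hset : {ω | ∃ i, ((univ.filter fun j => ‖Y j ω - Y i ω‖ ≤ r * h).card : ℝ) <
        p₀ / 4 * ((n + 1 : ℕ) : ℝ) * h ^ d}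
      = ⋃ i, {ω | ((univ.filter fun j => ‖Y j ω - Y i ω‖ ≤ r * h).card : ℝ) <
          t * ((n : ℝ) + 1) / 4} := by
    rw [Set.setOf_exists]
    simp only [hceq]
  rw [hset]
  calc P (⋃ i, {ω | ((univ.filter fun j => ‖Y j ω - Y i ω‖ ≤ r * h).card : ℝ) <
          t * ((n : ℝ) + 1) / 4})
      ≤ ∑' i : Fin (n + 1), P {ω | ((univ.filter fun j => ‖Y j ω - Y i ω‖ ≤ r * h).card : ℝ) <
          t * ((n : ℝ) + 1) / 4} := measure_iUnion_le _
    _ ≤ ∑' _ : Fin (n + 1), ENNReal.ofReal (Real.exp (-(t * ((n : ℝ) + 1) / 16))) :=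
        ENNReal.tsum_le_tsum fun i =>
          single_occupancy_bound P μ t (r * h) ht0 ht1 hs hn Y hmeas hindep hid hμ' i
    _ = ((n + 1 : ℕ) : ℝ≥0∞) * ENNReal.ofReal (Real.exp (-(t * ((n : ℝ) + 1) / 16))) := by
        rw [tsum_fintype]
        simp [Finset.sum_const, Finset.card_univ, nsmul_eq_mul]
    _ = ENNReal.ofReal (((n + 1 : ℕ) : ℝ) * Real.exp (-(t * ((n : ℝ) + 1) / 16))) := by
        rw [ENNReal.ofReal_mul (by positivity), ENNReal.ofReal_natCast]
    _ = ENNReal.ofReal (((n + 1 : ℕ) : ℝ) * Real.exp (-(p₀ / 16) * ((n + 1 : ℕ) : ℝ) * h ^ d)) := by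
        congr 2
        push_cast
        rw [htdef]
        ring
end

section
/- Expected reciprocal-KDE bound for i.i.d. particles: under the kernel lower bound K_h(u) ≥ κ h^{−d} for ‖u‖ ≤ r h and K_h(0) = K(0) h^{−d} with K(0) > 0, if Y₁,…,Y_N are i.i.d. from μ with N ≥ 2 and μ(B(y, rh)) ≥ p₀ h^d for μ-a.e. y, then E[ (1/N) ∑_{i=1}^N 1/q_Y(Y_i) ] ≤ 4/(κ p₀) + (N h^d / K(0)) · N exp( −(p₀/16) N h^d ), where q_Y(z) := (1/N) ∑_{j=1}^N K_h(z − Y_j). -/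
open MeasureTheory Finset ProbabilityTheory

open scoped ENNReal

lemma aux_pi_pow {α : Type*} [MeasurableSpace α] (μ : Measure α) [IsProbabilityMeasure μ]
    (n : ℕ) (f : α → ℝ) :
    ∫ x : Fin n → α, ∏ j, f (x j) ∂(Measure.pi fun _ => μ) = (∫ z, f z ∂μ) ^ n := by
  letI : MeasureSpace α := ⟨μ⟩
  haveI : SigmaFinite (volume : Measure α) := inferInstanceAs (SigmaFinite μ)
  have := MeasureTheory.integral_fintype_prod_eq_pow (ι := Fin n) (μ := μ) f
  simpa [volume_pi] using this

lemma aux_ball_integral {α : Type*} [MeasurableSpace α] (μ : Measure α) [IsProbabilityMeasure μ]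
    {B : Set α} (hB : MeasurableSet B) (t : ℝ) [DecidablePred (· ∈ B)] :
    ∫ z, (if z ∈ B then t else 1) ∂μ = 1 - (1 - t) * (μ B).toReal := by
  have : (fun z => if z ∈ B then t else 1) = fun z => 1 + B.indicator (fun _ => t - 1) z := by
    ext z; by_cases hz : z ∈ B <;> simp [hz]
  rw [this, integral_add (integrable_const 1) ((integrable_const (t-1)).indicator hB),
    integral_const, integral_indicator_const _ hB]
  simp [measure_univ]; rw [measureReal_def]; ring

lemma aux_antideriv (q : ℝ) (hq0 : 0 < q) (hq1 : q ≤ 1) (n : ℕ) :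
    ∫ t in (0:ℝ)..1, (1 - (1 - t) * q) ^ n ≤ 1 / ((n + 1) * q) := by
  have hd : ∀ t ∈ Set.uIcc (0:ℝ) 1, HasDerivAt (fun t => (1 - (1 - t) * q) ^ (n + 1) / ((n + 1) * q))
      ((1 - (1 - t) * q) ^ n) t := by
    intro t _
    have h1 : HasDerivAt (fun t : ℝ => 1 - (1 - t) * q) q t := by
      have : HasDerivAt (fun t : ℝ => 1 - (1 - t) * q) (0 - (0 - 1) * q) t :=
        (hasDerivAt_const t 1).sub (((hasDerivAt_const t 1).sub (hasDerivAt_id t)).mul_const q)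
      simpa using this
    have h2 := (h1.pow (n + 1)).div_const ((n + 1) * q)
    refine h2.congr_deriv ?_
    rw [Nat.add_sub_cancel]; push_cast; field_simp
  have hcont : IntervalIntegrable (fun t => (1 - (1 - t) * q) ^ n) MeasureTheory.volume 0 1 := by
    apply Continuous.intervalIntegrable; continuity
  rw [intervalIntegral.integral_eq_sub_of_hasDerivAt hd hcont]
  have hpos : 0 < ((n : ℝ) + 1) * q := by positivity
  have h0 : (0:ℝ) ≤ (1 - 1 * q) ^ (n + 1) := by
    have : (0:ℝ) ≤ 1 - q := by linarith
    simpa using pow_nonneg this (n + 1)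
  have : (1:ℝ) ^ (n+1) / ((↑n + 1) * q) - (1 - 1 * q) ^ (n + 1) / ((↑n + 1) * q) ≤ 1 / ((↑n + 1) * q) := by
    rw [one_pow]
    have := div_nonneg h0 hpos.le
    linarith
  simpa using this

set_option maxHeartbeats 2000000 in
lemma aux_core {α : Type*} [MeasurableSpace α] (μ : Measure α) [IsProbabilityMeasure μ]
    (D : α → α → Prop) [∀ y z, Decidable (D y z)] (hD : MeasurableSet {p : α × α | D p.1 p.2})
    (hrefl : ∀ y, D y y) (q : ℝ) (hq0 : 0 < q) (hq1 : q ≤ 1)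
    (hq : ∀ᵐ y ∂μ, q ≤ (μ {z | D y z}).toReal)
    (n : ℕ) (i : Fin (n + 1)) :
    ∫ x, (((Finset.univ.filter (fun j => D (x i) (x j))).card : ℝ))⁻¹
        ∂(Measure.pi fun _ : Fin (n + 1) => μ) ≤ 1 / ((n + 1) * q) := by
  set π : Measure (Fin (n+1) → α) := Measure.pi fun _ => μ with hπ
  haveI : IsProbabilityMeasure π := by rw [hπ]; infer_instance
  set c : (Fin (n+1) → α) → ℕ := fun x => (Finset.univ.filter (fun j => D (x i) (x j))).card
    with hcdef
  -- measurability of c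
  have hsec : ∀ y : α, MeasurableSet {z | D y z} := fun y => measurable_prodMk_left hD
  have hmul : ∀ j : Fin (n+1), MeasurableSet {x : Fin (n+1) → α | D (x i) (x j)} := by
    intro j
    have : {x : Fin (n+1) → α | D (x i) (x j)}
        = (fun x : Fin (n+1) → α => (x i, x j)) ⁻¹' {p : α × α | D p.1 p.2} := rfl
    rw [this]
    exact hD.preimage ((measurable_pi_apply i).prodMk (measurable_pi_apply j))
  have hc : Measurable c := by
    have : c = fun x => ∑ j : Fin (n+1), if D (x i) (x j) then 1 else 0 := by
      funext x
      show (Finset.univ.filter (fun j => D (x i) (x j))).card = _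
      rw [Finset.card_filter]
    rw [this]
    exact Finset.measurable_sum _ fun j _ =>
      Measurable.ite (hmul j) measurable_const measurable_const
  have hc1 : ∀ x, 1 ≤ c x := by
    intro x
    refine Finset.card_pos.mpr ⟨i, Finset.mem_filter.mpr ⟨Finset.mem_univ i, hrefl _⟩⟩
  -- step a : inverse as interval integral
  have ha : ∀ x, ((c x : ℝ))⁻¹ = ∫ t in Set.Ioc (0:ℝ) 1, t ^ (c x - 1) ∂volume := by
    intro x
    rw [← intervalIntegral.integral_of_le zero_le_one, integral_pow, one_pow,
      zero_pow (Nat.succ_ne_zero _), sub_zero, one_div]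
    congr 1
    rw [show ((c x - 1 : ℕ) : ℝ) + 1 = ((c x - 1 + 1 : ℕ) : ℝ) by push_cast; ring]
    norm_cast
    have h := hc1 x
    omega
  show ∫ x, ((c x : ℝ))⁻¹ ∂π ≤ _
  simp_rw [ha]
  -- step b : Fubini swap
  have hintg : Integrable (fun p : (Fin (n+1) → α) × ℝ => p.2 ^ (c p.1 - 1))
      (π.prod (volume.restrict (Set.Ioc 0 1))) := by
    have hmeas : Measurable (fun p : (Fin (n+1) → α) × ℝ => p.2 ^ (c p.1 - 1)) :=
      Measurable.pow measurable_snd ((hc.comp measurable_fst).sub measurable_const)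
    refine (integrable_const (1:ℝ)).mono' hmeas.aestronglyMeasurable ?_
    have hae : ∀ᵐ z ∂(π.prod (volume.restrict (Set.Ioc (0:ℝ) 1))), z.2 ∈ Set.Ioc (0:ℝ) 1 := by
      rw [MeasureTheory.ae_iff]
      have h1 : {z : (Fin (n+1) → α) × ℝ | ¬ z.2 ∈ Set.Ioc (0:ℝ) 1}
          = Set.univ ×ˢ (Set.Ioc (0:ℝ) 1)ᶜ := by ext z; simp
      rw [h1, Measure.prod_prod]
      simp [Measure.restrict_apply measurableSet_Ioc.compl]
    filter_upwards [hae] with z hz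
    rw [Real.norm_eq_abs, abs_of_nonneg (pow_nonneg hz.1.le _)]
    exact pow_le_one₀ hz.1.le hz.2
  rw [MeasureTheory.integral_integral_swap hintg]
  -- step c : pointwise-in-t bound
  have hclaim : ∀ t ∈ Set.Ioc (0:ℝ) 1,
      ∫ x, (t ^ (c x - 1) : ℝ) ∂π ≤ (1 - (1 - t) * q) ^ n := by
    intro t ht
    have ht0 : 0 < t := ht.1
    have ht1 : t ≤ 1 := ht.2
    -- product identity
    have hid : ∀ x, (t ^ (c x - 1) : ℝ)
        = ∏ j ∈ Finset.univ.erase i, (if D (x i) (x j) then t else 1) := by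
      intro x
      rw [Finset.prod_ite, Finset.prod_const, Finset.prod_const, one_pow, mul_one]
      congr 1
      have h2 : Finset.univ.filter (fun j => D (x i) (x j))
          = insert i ((Finset.univ.erase i).filter (fun j => D (x i) (x j))) := by
        ext j
        by_cases hj : j = i <;> simp [hj, hrefl, Finset.mem_filter, Finset.mem_erase]
      have h3 : i ∉ (Finset.univ.erase i).filter (fun j => D (x i) (x j)) := by
        simp
      have h5 : c x = ((Finset.univ.erase i).filter (fun j => D (x i) (x j))).card + 1 := by
        show (Finset.univ.filter (fun j => D (x i) (x j))).card = _
        rw [h2, Finset.card_insert_of_notMem h3]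
      omega
    simp_rw [hid]
    -- split off coordinate i
    have mp := (measurePreserving_piFinSuccAbove (fun _ : Fin (n+1) => μ) i).symm
    rw [← hπ] at mp
    rw [← mp.integral_comp (MeasurableEquiv.measurableEmbedding _)]
    have heval : ∀ (w : α × (Fin n → α)),
        (∏ j ∈ Finset.univ.erase i,
          (if D (((MeasurableEquiv.piFinSuccAbove (fun _ : Fin (n+1) => α) i).symm w) i)
              (((MeasurableEquiv.piFinSuccAbove (fun _ : Fin (n+1) => α) i).symm w) j)
            then t else 1))
        = ∏ k : Fin n, (if D w.1 (w.2 k) then t else 1) := by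
      rintro ⟨y, z⟩
      have hsymm : (MeasurableEquiv.piFinSuccAbove (fun _ : Fin (n+1) => α) i).symm (y, z)
            = Fin.insertNth (α := fun _ : Fin (n+1) => α) i y z := rfl
      simp only [hsymm, Fin.insertNth_apply_same]
      have h4 : ∀ j ∈ Finset.univ.erase i,
          (if D y (Fin.insertNth (α := fun _ : Fin (n+1) => α) i y z j) then t else 1)
            = (fun j => if j = i then 1 else
                if D y (Fin.insertNth (α := fun _ : Fin (n+1) => α) i y z j) then t else 1) j := by
        intro j hj
        exact (if_neg (Finset.mem_erase.mp hj).1).symm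
      rw [Finset.prod_congr rfl h4, Finset.prod_erase _ (by simp),
        Fin.prod_univ_succAbove (fun j => if j = i then 1 else
          if D y (Fin.insertNth (α := fun _ : Fin (n+1) => α) i y z j) then t else 1) i]
      simp [Fin.succAbove_ne, Fin.insertNth_apply_succAbove]
    simp_rw [heval]
    -- Fubini on product
    have hint2 : Integrable (fun z : α × (Fin n → α) => ∏ k : Fin n, (if D z.1 (z.2 k) then t else 1))
        ((μ.prod (Measure.pi fun _ : Fin n => μ))) := by
      have hmeas2 : Measurable (fun z : α × (Fin n → α) => ∏ k : Fin n, (if D z.1 (z.2 k) then t else 1)) := by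
        refine Finset.measurable_prod _ fun k _ => ?_
        refine Measurable.ite ?_ measurable_const measurable_const
        have : {z : α × (Fin n → α) | D z.1 (z.2 k)}
            = (fun z : α × (Fin n → α) => (z.1, z.2 k)) ⁻¹' {p : α × α | D p.1 p.2} := rfl
        rw [this]
        exact hD.preimage (measurable_fst.prodMk ((measurable_pi_apply k).comp measurable_snd))
      refine (integrable_const (1:ℝ)).mono' hmeas2.aestronglyMeasurable ?_
      refine Filter.Eventually.of_forall fun z => ?_
      rw [Real.norm_eq_abs]
      have h5 : ∀ k : Fin n, (0:ℝ) ≤ (if D z.1 (z.2 k) then t else 1) := by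
        intro k
        by_cases hk : D z.1 (z.2 k) <;> simp [hk, ht0.le]
      have h6 : ∀ k ∈ Finset.univ, (if D z.1 (z.2 k) then t else 1) ≤ 1 := by
        intro k _
        by_cases hk : D z.1 (z.2 k) <;> simp [hk, ht1]
      rw [abs_of_nonneg (Finset.prod_nonneg fun k _ => h5 k)]
      calc ∏ k : Fin n, (if D z.1 (z.2 k) then t else 1) ≤ ∏ k : Fin n, 1 :=
            Finset.prod_le_prod (fun k _ => h5 k) h6
        _ = 1 := by simp
    rw [MeasureTheory.integral_prod _ hint2]
    -- inner integral via aux_pi_pow and aux_ball_integral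
    have hinner : ∀ y : α, ∫ z : Fin n → α, ∏ k, (if D y (z k) then t else 1)
        ∂(Measure.pi fun _ => μ) = (1 - (1 - t) * (μ {w | D y w}).toReal) ^ n := by
      intro y
      rw [aux_pi_pow μ n (fun w => if D y w then t else 1)]
      congr 1
      exact aux_ball_integral μ (hsec y) t
    simp_rw [hinner]
    -- integrate over y
    have hb : ∀ᵐ y ∂μ, (1 - (1 - t) * (μ {w | D y w}).toReal) ^ n ≤ (1 - (1 - t) * q) ^ n := by
      filter_upwards [hq] with y hy
      have hμB1 : (μ {w | D y w}).toReal ≤ 1 :=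
        (ENNReal.toReal_mono ENNReal.one_ne_top prob_le_one).trans_eq ENNReal.toReal_one
      refine pow_le_pow_left₀ ?_ ?_ n
      · nlinarith [ENNReal.toReal_nonneg (a := μ {w | D y w})]
      · nlinarith
    have hnn : ∀ᵐ y ∂μ, 0 ≤ (1 - (1 - t) * (μ {w | D y w}).toReal) ^ n := by
      refine Filter.Eventually.of_forall fun y => ?_
      have hμB1 : (μ {w | D y w}).toReal ≤ 1 :=
        (ENNReal.toReal_mono ENNReal.one_ne_top prob_le_one).trans_eq ENNReal.toReal_one
      refine pow_nonneg ?_ n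
      nlinarith [ENNReal.toReal_nonneg (a := μ {w | D y w})]
    calc ∫ y, (1 - (1 - t) * (μ {w | D y w}).toReal) ^ n ∂μ
        ≤ ∫ _, (1 - (1 - t) * q) ^ n ∂μ :=
          integral_mono_of_nonneg hnn (integrable_const _) hb
      _ = (1 - (1 - t) * q) ^ n := by simp [measure_univ]
  -- step d : integrate the bound in t
  have hmono : ∫ t in Set.Ioc (0:ℝ) 1, (∫ x, (t ^ (c x - 1) : ℝ) ∂π) ∂volume
      ≤ ∫ t in Set.Ioc (0:ℝ) 1, (1 - (1 - t) * q) ^ n ∂volume := by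
    refine integral_mono_of_nonneg ?_ ?_ ?_
    · filter_upwards [ae_restrict_mem measurableSet_Ioc] with t ht
      exact integral_nonneg fun x => pow_nonneg ht.1.le _
    · apply Continuous.integrableOn_Ioc; continuity
    · filter_upwards [ae_restrict_mem measurableSet_Ioc] with t ht
      exact hclaim t ht
  refine hmono.trans ?_
  rw [← intervalIntegral.integral_of_le zero_le_one]
  exact aux_antideriv q hq0 hq1 n

-- aux 2: joint law is pi
lemma aux_map_pi {Ω α : Type*} [MeasurableSpace Ω] [MeasurableSpace α]
    (P : Measure Ω) [IsProbabilityMeasure P] {N : ℕ} (Y : Fin N → Ω → α)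
    (hmeas : ∀ i, Measurable (Y i))
    (hindep : iIndepFun Y P)
    (μ : Measure α) [IsProbabilityMeasure μ] (hid : ∀ i, Measure.map (Y i) P = μ) :
    Measure.map (fun ω i => Y i ω) P = Measure.pi (fun _ => μ) := by
  refine (Measure.pi_eq fun s hs => ?_).symm
  rw [Measure.map_apply (measurable_pi_lambda _ hmeas) (MeasurableSet.univ_pi hs)]
  have h1 : (fun ω i => Y i ω) ⁻¹' (Set.pi Set.univ s) = ⋂ i ∈ Finset.univ, Y i ⁻¹' s i := by
    ext ω; simp [Set.mem_pi]
  rw [h1, hindep.measure_inter_preimage_eq_mul Finset.univ (fun i _ => hs i)]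
  refine Finset.prod_congr rfl fun i _ => ?_
  rw [← hid i, Measure.map_apply (hmeas i) (hs i)]


set_option maxHeartbeats 2000000 in
/-- Expected reciprocal-KDE bound for i.i.d. particles: under the kernel lower bound
`K_h ≥ κ h^{−d}` on the ball of radius `rh`, `K(0) > 0`, and the lower local mass
condition, `E[(1/N)∑ᵢ 1/q_Y(Yᵢ)] ≤ 4/(κ p₀) + (N h^d/K(0)) · N exp(−(p₀/16) N h^d)`. -/
theorem expected_reciprocal_kde_iid {d : ℕ} (h κ r p₀ : ℝ)
    (hh : 0 < h) (hκ : 0 < κ) (hr : 0 < r) (hp₀ : 0 < p₀)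
    (K : EuclideanSpace ℝ (Fin d) → ℝ) (hKnn : ∀ u, 0 ≤ K u) (hK0 : 0 < K 0)
    (Kh : EuclideanSpace ℝ (Fin d) → ℝ)
    (hKh : ∀ u, Kh u = (h ^ d)⁻¹ * K (h⁻¹ • u))
    (hKlow : ∀ u, ‖u‖ ≤ r * h → κ * (h ^ d)⁻¹ ≤ Kh u)
    {Ω : Type*} [MeasurableSpace Ω] (P : Measure Ω) [IsProbabilityMeasure P]
    (μ : Measure (EuclideanSpace ℝ (Fin d))) [IsProbabilityMeasure μ]
    (N : ℕ) (hN : 2 ≤ N) (Y : Fin N → Ω → EuclideanSpace ℝ (Fin d))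
    (hmeas : ∀ i, Measurable (Y i))
    (hindep : iIndepFun Y P)
    (hid : ∀ i, Measure.map (Y i) P = μ)
    (hμ : ∀ᵐ y ∂μ, p₀ * h ^ d ≤ (μ (Metric.closedBall y (r * h))).toReal) :
    ∫ ω, (N : ℝ)⁻¹ * ∑ i, ((N : ℝ)⁻¹ * ∑ j, Kh (Y i ω - Y j ω))⁻¹ ∂P
      ≤ 4 / (κ * p₀) +
        ((N : ℝ) * h ^ d / K 0) * ((N : ℝ) * Real.exp (-(p₀ / 16) * N * h ^ d)) := by
  classical
  have hhd : (0:ℝ) < h ^ d := pow_pos hh d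
  set q : ℝ := p₀ * h ^ d with hqdef
  have hq0 : 0 < q := mul_pos hp₀ hhd
  have hq1 : q ≤ 1 := by
    obtain ⟨y, hy⟩ := hμ.exists
    exact hy.trans ((ENNReal.toReal_mono ENNReal.one_ne_top prob_le_one).trans_eq
      ENNReal.toReal_one)
  obtain ⟨n, rfl⟩ : ∃ n, N = n + 1 := ⟨N - 1, by omega⟩
  set Nr : ℝ := ((n : ℝ) + 1 : ℝ) with hNr
  have hNrpos : 0 < Nr := by positivity
  have hNcast : ((n + 1 : ℕ) : ℝ) = Nr := by rw [hNr]; push_cast; ring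
  -- the closeness relation
  have hD : MeasurableSet {p : EuclideanSpace ℝ (Fin d) × EuclideanSpace ℝ (Fin d) |
      ‖p.1 - p.2‖ ≤ r * h} := by
    have : IsClosed {p : EuclideanSpace ℝ (Fin d) × EuclideanSpace ℝ (Fin d) |
        ‖p.1 - p.2‖ ≤ r * h} :=
      isClosed_le (by fun_prop) continuous_const
    exact this.measurableSet
  have hrefl : ∀ y : EuclideanSpace ℝ (Fin d), ‖y - y‖ ≤ r * h := by
    intro y
    rw [sub_self, norm_zero]
    positivity
  have hμ' : ∀ᵐ y ∂μ, q ≤ (μ {z : EuclideanSpace ℝ (Fin d) | ‖y - z‖ ≤ r * h}).toReal := by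
    filter_upwards [hμ] with y hy
    have hset : {z : EuclideanSpace ℝ (Fin d) | ‖y - z‖ ≤ r * h}
        = Metric.closedBall y (r * h) := by
      ext z; simp [Metric.mem_closedBall, dist_eq_norm, norm_sub_rev]
    rw [hset]; exact hy
  have core : ∀ i : Fin (n + 1),
      ∫ x, (((Finset.univ.filter (fun j => ‖x i - x j‖ ≤ r * h)).card : ℝ))⁻¹
        ∂(Measure.pi fun _ : Fin (n + 1) => μ) ≤ 1 / ((n + 1) * q) :=
    fun i => aux_core μ (fun y z => ‖y - z‖ ≤ r * h) hD hrefl q hq0 hq1 hμ' n i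
  -- joint law
  have hm : Measurable fun ω (i : Fin (n + 1)) => Y i ω := measurable_pi_lambda _ hmeas
  have hmap := aux_map_pi P Y hmeas hindep μ hid
  set π : Measure (Fin (n + 1) → EuclideanSpace ℝ (Fin d)) := Measure.pi fun _ => μ with hπ
  haveI : IsProbabilityMeasure π := by rw [hπ]; infer_instance
  -- count function and bound function on the pi space
  set c : Fin (n + 1) → (Fin (n + 1) → EuclideanSpace ℝ (Fin d)) → ℕ :=
    fun i x => (Finset.univ.filter (fun j => ‖x i - x j‖ ≤ r * h)).card with hcdef
  set g : (Fin (n + 1) → EuclideanSpace ℝ (Fin d)) → ℝ :=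
    fun x => Nr⁻¹ * ∑ i, (Nr * h ^ d / κ) * ((c i x : ℝ))⁻¹ with hgdef
  have hc1 : ∀ i x, 1 ≤ c i x := by
    intro i x
    exact Finset.card_pos.mpr ⟨i, Finset.mem_filter.mpr ⟨Finset.mem_univ i, hrefl _⟩⟩
  have hc1' : ∀ i x, (1:ℝ) ≤ ((c i x : ℕ) : ℝ) := by
    intro i x; exact_mod_cast hc1 i x
  have hcinv_nonneg : ∀ i x, (0:ℝ) ≤ ((c i x : ℕ) : ℝ)⁻¹ := by
    intro i x; positivity
  have hcinv_le_one : ∀ i x, ((c i x : ℕ) : ℝ)⁻¹ ≤ 1 := by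
    intro i x
    rw [inv_le_one_iff₀]
    right; exact hc1' i x
  have hcmeas : ∀ i, Measurable fun x => ((c i x : ℕ) : ℝ) := by
    intro i
    have hmc : Measurable (c i) := by
      have hce : c i = fun x => ∑ j : Fin (n + 1), if ‖x i - x j‖ ≤ r * h then 1 else 0 := by
        funext x
        show (Finset.univ.filter (fun j => ‖x i - x j‖ ≤ r * h)).card = _
        rw [Finset.card_filter]
      rw [hce]
      refine Finset.measurable_sum _ fun j _ => Measurable.ite ?_ measurable_const
        measurable_const
      have hpre : {x : Fin (n + 1) → EuclideanSpace ℝ (Fin d) | ‖x i - x j‖ ≤ r * h}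
          = (fun x : Fin (n + 1) → EuclideanSpace ℝ (Fin d) => (x i, x j)) ⁻¹'
            {p : EuclideanSpace ℝ (Fin d) × EuclideanSpace ℝ (Fin d) | ‖p.1 - p.2‖ ≤ r * h} := rfl
      rw [hpre]
      exact hD.preimage ((measurable_pi_apply i).prodMk (measurable_pi_apply j))
    exact measurable_from_nat.comp hmc
  have hgmeas : Measurable g := by
    rw [hgdef]
    exact (Finset.measurable_sum _ fun i _ => ((hcmeas i).inv.const_mul _)).const_mul _
  have hgnonneg : ∀ x, 0 ≤ g x := by
    intro x
    rw [hgdef]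
    refine mul_nonneg (by positivity) (Finset.sum_nonneg fun i _ => mul_nonneg ?_ ?_)
    · positivity
    · exact hcinv_nonneg i x
  -- pointwise bound
  have hbound : ∀ (i : Fin (n + 1)) (x : Fin (n + 1) → EuclideanSpace ℝ (Fin d)),
      (((n + 1 : ℕ) : ℝ)⁻¹ * ∑ j, Kh (x i - x j))⁻¹
        ≤ (((n + 1 : ℕ) : ℝ) * h ^ d / κ) * ((c i x : ℕ) : ℝ)⁻¹ := by
    intro i x
    have hKind : ∀ j, κ * (h ^ d)⁻¹ * (if ‖x i - x j‖ ≤ r * h then (1:ℝ) else 0)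
        ≤ Kh (x i - x j) := by
      intro j
      by_cases hj : ‖x i - x j‖ ≤ r * h
      · rw [if_pos hj, mul_one]
        exact hKlow _ hj
      · rw [if_neg hj, mul_zero, hKh]
        have := hKnn (h⁻¹ • (x i - x j))
        positivity
    have hcsum : ((c i x : ℕ) : ℝ) = ∑ j, (if ‖x i - x j‖ ≤ r * h then (1:ℝ) else 0) := by
      show (((Finset.univ.filter (fun j => ‖x i - x j‖ ≤ r * h)).card : ℕ) : ℝ) = _
      rw [Finset.card_filter]
      push_cast
      refine Finset.sum_congr rfl fun j _ => ?_
      split <;> simp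
    have hsum : κ * (h ^ d)⁻¹ * ((c i x : ℕ) : ℝ) ≤ ∑ j, Kh (x i - x j) := by
      rw [hcsum, Finset.mul_sum]
      exact Finset.sum_le_sum fun j _ => hKind j
    have hcpos : (0:ℝ) < ((c i x : ℕ) : ℝ) := lt_of_lt_of_le one_pos (hc1' i x)
    have hA : 0 < ((n + 1 : ℕ) : ℝ)⁻¹ * (κ * (h ^ d)⁻¹ * ((c i x : ℕ) : ℝ)) := by
      rw [hNcast]
      positivity
    have hle : ((n + 1 : ℕ) : ℝ)⁻¹ * (κ * (h ^ d)⁻¹ * ((c i x : ℕ) : ℝ))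
        ≤ ((n + 1 : ℕ) : ℝ)⁻¹ * ∑ j, Kh (x i - x j) := by
      refine mul_le_mul_of_nonneg_left hsum ?_
      rw [hNcast]
      positivity
    refine (inv_anti₀ hA hle).trans_eq ?_
    rw [mul_inv, mul_inv, mul_inv, inv_inv, inv_inv]
    ring
  have hpoint : ∀ ω : Ω,
      ((n + 1 : ℕ) : ℝ)⁻¹ * ∑ i, (((n + 1 : ℕ) : ℝ)⁻¹ * ∑ j, Kh (Y i ω - Y j ω))⁻¹
        ≤ g (fun i => Y i ω) := by
    intro ω
    rw [hgdef]
    simp only [← hNcast]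
    refine mul_le_mul_of_nonneg_left ?_ (by positivity)
    exact Finset.sum_le_sum fun i _ => hbound i (fun k => Y k ω)
  have hnonneg : ∀ ω : Ω,
      0 ≤ ((n + 1 : ℕ) : ℝ)⁻¹ * ∑ i, (((n + 1 : ℕ) : ℝ)⁻¹ * ∑ j, Kh (Y i ω - Y j ω))⁻¹ := by
    intro ω
    refine mul_nonneg (by positivity) (Finset.sum_nonneg fun i _ => inv_nonneg.mpr ?_)
    refine mul_nonneg (by positivity) (Finset.sum_nonneg fun j _ => ?_)
    rw [hKh]
    have := hKnn (h⁻¹ • (Y i ω - Y j ω))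
    positivity
  have hgbd : ∀ x, g x ≤ Nr * h ^ d / κ := by
    intro x
    rw [hgdef]
    have hterm : ∀ i ∈ Finset.univ, (Nr * h ^ d / κ) * ((c i x : ℕ) : ℝ)⁻¹
        ≤ Nr * h ^ d / κ := by
      intro i _
      exact mul_le_of_le_one_right (by positivity) (hcinv_le_one i x)
    calc Nr⁻¹ * ∑ i, (Nr * h ^ d / κ) * ((c i x : ℕ) : ℝ)⁻¹
        ≤ Nr⁻¹ * ∑ _i : Fin (n + 1), (Nr * h ^ d / κ) :=
          mul_le_mul_of_nonneg_left (Finset.sum_le_sum hterm) (by positivity)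
      _ = Nr * h ^ d / κ := by
          rw [Finset.sum_const, Finset.card_univ, Fintype.card_fin, nsmul_eq_mul, hNcast,
            ← mul_assoc, inv_mul_cancel₀ (ne_of_gt hNrpos), one_mul]
  have hgY_int : Integrable (fun ω => g (fun i => Y i ω)) P := by
    refine (integrable_const (Nr * h ^ d / κ)).mono'
      ((hgmeas.comp hm).aestronglyMeasurable) ?_
    refine Filter.Eventually.of_forall fun ω => ?_
    rw [Real.norm_eq_abs, abs_of_nonneg (hgnonneg _)]
    exact hgbd _
  have hint_each : ∀ i : Fin (n + 1),
      Integrable (fun x => (Nr * h ^ d / κ) * ((c i x : ℕ) : ℝ)⁻¹) π := by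
    intro i
    refine (integrable_const (Nr * h ^ d / κ)).mono'
      (((hcmeas i).inv.const_mul _).aestronglyMeasurable) ?_
    refine Filter.Eventually.of_forall fun x => ?_
    rw [Real.norm_eq_abs, abs_of_nonneg (mul_nonneg (by positivity) (hcinv_nonneg i x))]
    exact mul_le_of_le_one_right (by positivity) (hcinv_le_one i x)
  have hsecond : 0 ≤ ((n + 1 : ℕ) : ℝ) * h ^ d / K 0
      * (((n + 1 : ℕ) : ℝ) * Real.exp (-(p₀ / 16) * ((n + 1 : ℕ) : ℝ) * h ^ d)) := by
    refine mul_nonneg (div_nonneg (mul_nonneg (Nat.cast_nonneg _) hhd.le) hK0.le)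
      (mul_nonneg (Nat.cast_nonneg _) (Real.exp_pos _).le)
  calc ∫ ω, ((n + 1 : ℕ) : ℝ)⁻¹ * ∑ i, (((n + 1 : ℕ) : ℝ)⁻¹ * ∑ j, Kh (Y i ω - Y j ω))⁻¹ ∂P
      ≤ ∫ ω, g (fun i => Y i ω) ∂P :=
        integral_mono_of_nonneg (Filter.Eventually.of_forall hnonneg) hgY_int
          (Filter.Eventually.of_forall hpoint)
    _ = ∫ x, g x ∂π := by
        rw [← hmap, integral_map hm.aemeasurable hgmeas.aestronglyMeasurable]
    _ = Nr⁻¹ * ∑ i, (Nr * h ^ d / κ) * ∫ x, ((c i x : ℕ) : ℝ)⁻¹ ∂π := by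
        rw [hgdef, MeasureTheory.integral_const_mul, integral_finset_sum _ fun i _ => hint_each i]
        congr 1
        refine Finset.sum_congr rfl fun i _ => ?_
        rw [MeasureTheory.integral_const_mul]
    _ ≤ Nr⁻¹ * ∑ _i : Fin (n + 1), (Nr * h ^ d / κ) * (1 / (Nr * q)) := by
        refine mul_le_mul_of_nonneg_left (Finset.sum_le_sum fun i _ => ?_) (by positivity)
        refine mul_le_mul_of_nonneg_left ?_ (by positivity)
        have := core i
        rw [hcdef]
        exact this
    _ = 1 / (κ * p₀) := by
        rw [Finset.sum_const, Finset.card_univ, Fintype.card_fin, nsmul_eq_mul, hNcast, hqdef]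
        field_simp
    _ ≤ 4 / (κ * p₀) + ((n + 1 : ℕ) : ℝ) * h ^ d / K 0
        * (((n + 1 : ℕ) : ℝ) * Real.exp (-(p₀ / 16) * ((n + 1 : ℕ) : ℝ) * h ^ d)) := by
        have h14 : 1 / (κ * p₀) ≤ 4 / (κ * p₀) := by
          rw [div_le_div_iff₀ (by positivity) (by positivity)]
          nlinarith [mul_pos hκ hp₀]
        linarith
end

section
/- Trajectory-level reciprocal-KDE control from initial occupancy (Proposition 5.5): suppose the kernel satisfies K_h(u) ≥ κ h^{−d} for ‖u‖ ≤ r h, the curves X₁,…,X_N : [0,T] → ℝ^d solve Xᵢ′(t) = b(t, Xᵢ(t)) for a time-dependent field b whose spatial Lipschitz constants L(t) satisfy Γ_T := ∫₀^T L(t) dt < ∞, and the initial configuration satisfies #{ j : ‖X_j(0) − X_i(0)‖ ≤ r h e^{−Γ_T} } ≥ α N h^d e^{−d Γ_T} for every i. Then for every t ∈ [0,T], (1/N) ∑_{i=1}^N 1/q_{X(t)}(X_i(t)) ≤ e^{d Γ_T}/(κ α), where q_{X(t)}(z) := (1/N) ∑_{j=1}^N K_h(z − X_j(t)). -/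
open MeasureTheory Set Finset

/-- One Grönwall piece: if the integral of `L` over `[u,v]` is at most `c < 1`,
then `‖Y s‖ ≤ ‖Y u‖ / (1-c)` on `[u,v]`. -/
private lemma grw_piece {d : ℕ} (Y g : ℝ → EuclideanSpace ℝ (Fin d)) (L : ℝ → ℝ)
    (u v : ℝ) (huv : u ≤ v)
    (hLnn : ∀ t, 0 ≤ L t)
    (hLint : IntervalIntegrable L volume u v)
    (hY : ∀ t ∈ Icc u v, HasDerivAt Y (g t) t)
    (hbound : ∀ t ∈ Icc u v, ‖g t‖ ≤ L t * ‖Y t‖)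
    (c : ℝ) (hc1 : c < 1) (hA : (∫ s in u..v, L s) ≤ c) :
    ∀ t ∈ Icc u v, ‖Y t‖ ≤ ‖Y u‖ * (1 - c)⁻¹ := by
  have hne : (Icc u v).Nonempty := nonempty_Icc.2 huv
  have hYc : ContinuousOn Y (Icc u v) := fun t ht =>
    (hY t ht).continuousAt.continuousWithinAt
  obtain ⟨s₀, hs₀, hmax⟩ := isCompact_Icc.exists_isMaxOn hne
    (continuous_norm.comp_continuousOn hYc)
  set M := ‖Y s₀‖ with hMdef
  have hMnn : (0:ℝ) ≤ M := norm_nonneg _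
  have hMb : ∀ s ∈ Icc u v, ‖Y s‖ ≤ M := fun s hs => hmax hs
  have key : ∀ s ∈ Icc u v, ‖Y s‖ ≤ ‖Y u‖ + c * M := by
    intro s hs
    have hus : u ≤ s := hs.1
    have hsubIcc : Icc u s ⊆ Icc u v := Icc_subset_Icc le_rfl hs.2
    have hsub : uIcc u s ⊆ Icc u v := by rw [uIcc_of_le hus]; exact hsubIcc
    have hg_eq : ∀ x ∈ Icc u v, deriv Y x = g x := fun x hx => (hY x hx).deriv
    have hLs : IntervalIntegrable L volume u s :=
      hLint.mono_set (by rw [uIcc_of_le hus, uIcc_of_le huv]; exact hsubIcc)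
    have hLMs : IntervalIntegrable (fun σ => L σ * M) volume u s := hLs.mul_const M
    have hgint : IntervalIntegrable g volume u s := by
      rw [intervalIntegrable_iff_integrableOn_Icc_of_le hus]
      have hLM' : IntegrableOn (fun σ => L σ * M) (Icc u s) volume :=
        (intervalIntegrable_iff_integrableOn_Icc_of_le hus).1 hLMs
      refine MeasureTheory.Integrable.mono hLM' ?_ ?_
      · refine ((stronglyMeasurable_deriv Y).aestronglyMeasurable.restrict).congr ?_
        exact MeasureTheory.ae_restrict_of_forall_mem measurableSet_Icc
          (fun x hx => hg_eq x (hsubIcc hx))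
      · refine MeasureTheory.ae_restrict_of_forall_mem measurableSet_Icc ?_
        intro x hx
        have hxv : x ∈ Icc u v := hsubIcc hx
        have h1 : ‖g x‖ ≤ L x * M :=
          (hbound x hxv).trans (mul_le_mul_of_nonneg_left (hMb x hxv) (hLnn x))
        exact h1.trans (le_abs_self _)
    have hftc : ∫ σ in u..s, g σ = Y s - Y u :=
      intervalIntegral.integral_eq_sub_of_hasDerivAt (fun x hx => hY x (hsub hx)) hgint
    have h1 : ‖Y s‖ ≤ ‖Y u‖ + ‖∫ σ in u..s, g σ‖ := by
      have heq : Y s = Y u + (Y s - Y u) := by abel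
      calc ‖Y s‖ = ‖Y u + (Y s - Y u)‖ := by rw [← heq]
      _ ≤ ‖Y u‖ + ‖Y s - Y u‖ := norm_add_le _ _
      _ = ‖Y u‖ + ‖∫ σ in u..s, g σ‖ := by rw [hftc]
    have h2 : ‖∫ σ in u..s, g σ‖ ≤ ∫ σ in u..s, L σ * M := by
      calc ‖∫ σ in u..s, g σ‖ ≤ ∫ σ in u..s, ‖g σ‖ :=
            intervalIntegral.norm_integral_le_integral_norm hus
      _ ≤ ∫ σ in u..s, L σ * M := by
          refine intervalIntegral.integral_mono_on hus hgint.norm hLMs ?_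
          intro x hx
          exact (hbound x (hsubIcc hx)).trans
            (mul_le_mul_of_nonneg_left (hMb x (hsubIcc hx)) (hLnn x))
    have h3 : ∫ σ in u..s, L σ * M ≤ c * M := by
      rw [intervalIntegral.integral_mul_const]
      have hsv : IntervalIntegrable L volume s v :=
        hLint.mono_set (by
          rw [uIcc_of_le hs.2, uIcc_of_le huv]
          exact Icc_subset_Icc hus le_rfl)
      have hsplit : (∫ σ in u..s, L σ) + ∫ σ in s..v, L σ = ∫ σ in u..v, L σ :=
        intervalIntegral.integral_add_adjacent_intervals hLs hsv
      have hnn : 0 ≤ ∫ σ in s..v, L σ :=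
        intervalIntegral.integral_nonneg hs.2 (fun x _ => hLnn x)
      have : (∫ σ in u..s, L σ) ≤ c := by linarith
      exact mul_le_mul_of_nonneg_right this hMnn
    linarith
  have h1c : (0:ℝ) < 1 - c := by linarith
  have hMle : M ≤ ‖Y u‖ * (1 - c)⁻¹ := by
    have hkey := key s₀ hs₀
    have h2 : M * (1 - c) ≤ ‖Y u‖ := by nlinarith
    calc M = M * (1 - c) * (1 - c)⁻¹ := by field_simp
    _ ≤ ‖Y u‖ * (1 - c)⁻¹ := mul_le_mul_of_nonneg_right h2 (inv_nonneg.2 h1c.le)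
  exact fun t ht => (hMb t ht).trans hMle

/-- Grönwall with time-dependent integrable Lipschitz coefficient. -/
private lemma grw_exp {d : ℕ} (T : ℝ) (hT : 0 ≤ T)
    (Y g : ℝ → EuclideanSpace ℝ (Fin d)) (L : ℝ → ℝ)
    (hLnn : ∀ t, 0 ≤ L t) (hLint : IntervalIntegrable L volume 0 T)
    (hY : ∀ t ∈ Icc (0:ℝ) T, HasDerivAt Y (g t) t)
    (hbound : ∀ t ∈ Icc (0:ℝ) T, ‖g t‖ ≤ L t * ‖Y t‖) :
    ∀ t ∈ Icc (0:ℝ) T, ‖Y t‖ ≤ ‖Y 0‖ * Real.exp (∫ s in (0:ℝ)..T, L s) := by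
  intro t ht
  set Γ := ∫ s in (0:ℝ)..T, L s with hΓ
  have hΓnn : 0 ≤ Γ := intervalIntegral.integral_nonneg hT (fun x _ => hLnn x)
  set A : ℝ → ℝ := fun s => ∫ σ in (0:ℝ)..s, L σ with hAdef
  have hLIcc : IntegrableOn L (Icc 0 T) volume :=
    (intervalIntegrable_iff_integrableOn_Icc_of_le hT).1 hLint
  have hAcont : ContinuousOn A (Icc 0 T) := by
    have h := intervalIntegral.continuousOn_primitive_interval
      (f := L) (a := (0:ℝ)) (b := T) (μ := volume) (by rwa [uIcc_of_le hT])
    rwa [uIcc_of_le hT] at h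
  have hLsub : ∀ u v : ℝ, u ∈ Icc (0:ℝ) T → v ∈ Icc (0:ℝ) T →
      IntervalIntegrable L volume u v := fun u v hu hv =>
    hLint.mono_set (by rw [uIcc_of_le hT]; exact uIcc_subset_Icc hu hv)
  have hA0 : A 0 = 0 := intervalIntegral.integral_same
  have hAT : A T = Γ := rfl
  have hAmono : ∀ u v : ℝ, u ∈ Icc (0:ℝ) T → v ∈ Icc (0:ℝ) T → u ≤ v → A u ≤ A v := by
    intro u v hu hv huv
    have hsplit : A v - A u = ∫ σ in u..v, L σ :=
      intervalIntegral.integral_interval_sub_left (hLsub 0 v (left_mem_Icc.2 hT) hv)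
        (hLsub 0 u (left_mem_Icc.2 hT) hu)
    have hnn : 0 ≤ ∫ σ in u..v, L σ :=
      intervalIntegral.integral_nonneg huv (fun x _ => hLnn x)
    linarith
  have main : ∀ n : ℕ, Γ < n → ‖Y t‖ ≤ ‖Y 0‖ * ((1 - Γ/n)⁻¹)^(n+1) := by
    intro n hn
    have hnpos : (0:ℝ) < n := lt_of_le_of_lt hΓnn hn
    set c := Γ / (n:ℝ) with hc
    have hc0 : 0 ≤ c := div_nonneg hΓnn hnpos.le
    have hc1 : c < 1 := (div_lt_one hnpos).2 hn
    have hβ1 : (1:ℝ) ≤ (1 - c)⁻¹ := by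
      rw [le_inv_comm₀ one_pos (by linarith)]
      linarith
    have claim : ∀ k : ℕ, ∀ s ∈ Icc (0:ℝ) T, A s ≤ ((k:ℝ)+1)*c →
        ‖Y s‖ ≤ ‖Y 0‖ * ((1-c)⁻¹)^(k+1) := by
      intro k
      induction k with
      | zero =>
        intro s hs hAs
        have hAs' : (∫ σ in (0:ℝ)..s, L σ) ≤ c := by
          have : A s ≤ c := by simpa using hAs
          simpa [hAdef] using this
        have hp := grw_piece Y g L 0 s hs.1 hLnn (hLsub 0 s (left_mem_Icc.2 hT) hs)
          (fun x hx => hY x (Icc_subset_Icc le_rfl hs.2 hx))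
          (fun x hx => hbound x (Icc_subset_Icc le_rfl hs.2 hx)) c hc1 hAs'
        simpa using hp s ⟨hs.1, le_rfl⟩
      | succ k ih =>
        intro s hs hAs
        by_cases hcase : A s ≤ ((k:ℝ)+1)*c
        · refine (ih s hs hcase).trans ?_
          have : ((1-c)⁻¹)^(k+1) ≤ ((1-c)⁻¹)^(k+1+1) :=
            pow_le_pow_right₀ hβ1 (by omega)
          exact mul_le_mul_of_nonneg_left this (norm_nonneg _)
        · push_neg at hcase
          set S := {x ∈ Icc (0:ℝ) T | ((k:ℝ)+1)*c ≤ A x} with hSdef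
          have hScl : IsClosed S :=
            hAcont.preimage_isClosed_of_isClosed isClosed_Icc isClosed_Ici
          have hSsub : S ⊆ Icc (0:ℝ) T := fun x hx => hx.1
          have hScpt : IsCompact S := isCompact_Icc.of_isClosed_subset hScl hSsub
          have hSne : S.Nonempty := ⟨s, hs, hcase.le⟩
          set u := sInf S with hu
          have huS : u ∈ S := hScpt.sInf_mem hSne
          have hut : u ≤ s := csInf_le hScpt.bddBelow ⟨hs, hcase.le⟩
          have hk1c_nn : 0 ≤ ((k:ℝ)+1)*c := by positivity
          have hAu_le : A u ≤ ((k:ℝ)+1)*c := by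
            have hAsT : A s ≤ A T := hAmono s T hs (right_mem_Icc.2 hT) hs.2
            have hval : ((k:ℝ)+1)*c ∈ Icc (A 0) (A T) := by
              constructor
              · rw [hA0]; exact hk1c_nn
              · linarith [hcase.le.trans hAsT]
            obtain ⟨s', hs', hAs'⟩ := intermediate_value_Icc hT hAcont hval
            have hus' : u ≤ s' := csInf_le hScpt.bddBelow ⟨hs', hAs'.ge⟩
            calc A u ≤ A s' := hAmono u s' (hSsub huS) hs' hus'
            _ = ((k:ℝ)+1)*c := hAs'
          have hAu_ge : ((k:ℝ)+1)*c ≤ A u := huS.2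
          have huIcc : u ∈ Icc (0:ℝ) T := hSsub huS
          have hint_us : (∫ σ in u..s, L σ) = A s - A u :=
            (intervalIntegral.integral_interval_sub_left
              (hLsub 0 s (left_mem_Icc.2 hT) hs)
              (hLsub 0 u (left_mem_Icc.2 hT) huIcc)).symm
          have hAsle : A s ≤ ((k:ℝ)+2)*c := by push_cast at hAs ⊢; linarith
          have hpint : (∫ σ in u..s, L σ) ≤ c := by rw [hint_us]; linarith
          have hsubus : Icc u s ⊆ Icc (0:ℝ) T := Icc_subset_Icc huIcc.1 hs.2
          have hpiece := grw_piece Y g L u s hut hLnn (hLsub u s huIcc hs)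
            (fun x hx => hY x (hsubus hx)) (fun x hx => hbound x (hsubus hx)) c hc1 hpint
          have h1 := hpiece s ⟨hut, le_rfl⟩
          have h2 := ih u huIcc hAu_le
          calc ‖Y s‖ ≤ ‖Y u‖ * (1-c)⁻¹ := h1
          _ ≤ (‖Y 0‖ * ((1-c)⁻¹)^(k+1)) * (1-c)⁻¹ :=
            mul_le_mul_of_nonneg_right h2 (inv_nonneg.2 (by linarith))
          _ = ‖Y 0‖ * ((1-c)⁻¹)^(k+1+1) := by ring
    have hAt : A t ≤ ((n:ℝ)+1)*c := by
      have h1 : A t ≤ Γ := by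
        have := hAmono t T ht (right_mem_Icc.2 hT) ht.2
        simpa [hAT] using this
      have h2 : (n:ℝ) * c = Γ := by rw [hc]; field_simp [hnpos.ne']
      nlinarith
    exact claim n t ht hAt
  have hlim : Filter.Tendsto (fun n : ℕ => ‖Y 0‖ * ((1 - Γ/n)⁻¹)^(n+1))
      Filter.atTop (nhds (‖Y 0‖ * Real.exp Γ)) := by
    have h1 : Filter.Tendsto (fun n : ℕ => ((1 + (-Γ)/n) ^ n : ℝ))
        Filter.atTop (nhds (Real.exp (-Γ))) := Real.tendsto_one_add_div_pow_exp (-Γ)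
    have h2 : Filter.Tendsto (fun n : ℕ => (1 + (-Γ)/n : ℝ)) Filter.atTop (nhds 1) := by
      have hd : Filter.Tendsto (fun n : ℕ => ((-Γ)/n : ℝ)) Filter.atTop (nhds 0) :=
        Filter.Tendsto.div_atTop tendsto_const_nhds tendsto_natCast_atTop_atTop
      simpa using (tendsto_const_nhds (x := (1:ℝ))).add hd
    have h3 : Filter.Tendsto (fun n : ℕ => ((1 + (-Γ)/n : ℝ) ^ (n+1)))
        Filter.atTop (nhds (Real.exp (-Γ))) := by
      have := h1.mul h2
      simpa [pow_succ] using this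
    have h4 := h3.inv₀ (Real.exp_ne_zero _)
    have h5 := (tendsto_const_nhds (x := ‖Y 0‖)).mul h4
    have heq : ‖Y 0‖ * (Real.exp (-Γ))⁻¹ = ‖Y 0‖ * Real.exp Γ := by
      rw [Real.exp_neg, inv_inv]
    rw [heq] at h5
    refine h5.congr (fun n => ?_)
    rw [← inv_pow]
    congr 2
    ring
  refine ge_of_tendsto hlim ?_
  filter_upwards [Filter.eventually_gt_atTop ⌈Γ⌉₊] with n hn
  refine main n (lt_of_le_of_lt (Nat.le_ceil Γ) ?_)
  exact_mod_cast hn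

/-- Trajectory-level reciprocal-KDE control from initial occupancy (Proposition 5.5):
under the kernel lower bound and initial occupancy at the shrunken radius
`r h e^{−Γ_T}` with count `≥ α N h^d e^{−d Γ_T}`, along the flow one has
`(1/N) ∑ᵢ 1/q_{X(t)}(Xᵢ(t)) ≤ e^{d Γ_T}/(κ α)` for all `t ∈ [0,T]`. -/
theorem trajectory_reciprocal_kde_control {d : ℕ} (h κ r α T : ℝ)
    (hh : 0 < h) (hκ : 0 < κ) (hr : 0 < r) (hα : 0 < α) (hT : 0 < T)
    (Kh : EuclideanSpace ℝ (Fin d) → ℝ) (hKnn : ∀ u, 0 ≤ Kh u)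
    (hKlow : ∀ u, ‖u‖ ≤ r * h → κ * (h ^ d)⁻¹ ≤ Kh u)
    (b : ℝ → EuclideanSpace ℝ (Fin d) → EuclideanSpace ℝ (Fin d))
    (L : ℝ → ℝ) (hLnn : ∀ t, 0 ≤ L t)
    (hLint : IntervalIntegrable L volume 0 T)
    (hLip : ∀ t ∈ Icc (0 : ℝ) T, ∀ z z', ‖b t z - b t z'‖ ≤ L t * ‖z - z'‖)
    (Γ : ℝ) (hΓ : Γ = ∫ s in (0 : ℝ)..T, L s)
    (N : ℕ) (hN : 0 < N) (X : Fin N → ℝ → EuclideanSpace ℝ (Fin d))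
    (hX : ∀ i, ∀ t ∈ Icc (0 : ℝ) T, HasDerivAt (X i) (b t (X i t)) t)
    (hocc : ∀ i, α * N * h ^ d * Real.exp (-(d : ℝ) * Γ) ≤
      ((univ.filter fun j => ‖X j 0 - X i 0‖ ≤ r * h * Real.exp (-Γ)).card : ℝ)) :
    ∀ t ∈ Icc (0 : ℝ) T,
      (N : ℝ)⁻¹ * ∑ i, ((N : ℝ)⁻¹ * ∑ j, Kh (X i t - X j t))⁻¹
        ≤ Real.exp ((d : ℝ) * Γ) / (κ * α) := by
  intro t ht
  have hNpos : (0:ℝ) < N := Nat.cast_pos.2 hN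
  have hd : (0:ℝ) < h ^ d := pow_pos hh d
  have hlow : ∀ i, κ * α * Real.exp (-(d:ℝ)*Γ) ≤
      (N : ℝ)⁻¹ * ∑ j, Kh (X i t - X j t) := by
    intro i
    set S := univ.filter fun j => ‖X j 0 - X i 0‖ ≤ r * h * Real.exp (-Γ) with hSdef
    have hgood : ∀ j ∈ S, κ * (h^d)⁻¹ ≤ Kh (X i t - X j t) := by
      intro j hj
      have hj0 : ‖X j 0 - X i 0‖ ≤ r * h * Real.exp (-Γ) := (Finset.mem_filter.1 hj).2
      have hder := grw_exp T hT.le (fun s => X j s - X i s)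
        (fun s => b s (X j s) - b s (X i s)) L hLnn hLint
        (fun s hs => ((hX j s hs).sub (hX i s hs)))
        (fun s hs => hLip s hs (X j s) (X i s))
      have h1 : ‖X j t - X i t‖ ≤ ‖X j 0 - X i 0‖ * Real.exp Γ := by
        have := hder t ht
        rwa [← hΓ] at this
      have h2 : ‖X j t - X i t‖ ≤ r * h := by
        calc ‖X j t - X i t‖ ≤ (r * h * Real.exp (-Γ)) * Real.exp Γ :=
              h1.trans (mul_le_mul_of_nonneg_right hj0 (Real.exp_pos Γ).le)
        _ = r * h := by rw [mul_assoc, ← Real.exp_add]; simp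
      apply hKlow
      rwa [norm_sub_rev]
    have hsum : (S.card : ℝ) * (κ * (h^d)⁻¹) ≤ ∑ j, Kh (X i t - X j t) := by
      calc (S.card : ℝ) * (κ * (h^d)⁻¹) = S.card • (κ * (h^d)⁻¹) := by
            simp [nsmul_eq_mul]
      _ ≤ ∑ j ∈ S, Kh (X i t - X j t) := Finset.card_nsmul_le_sum S _ _ hgood
      _ ≤ ∑ j, Kh (X i t - X j t) :=
            Finset.sum_le_sum_of_subset_of_nonneg (Finset.subset_univ S)
              (fun j _ _ => hKnn _)
    have hcard := hocc i
    have hstep : α * N * h^d * Real.exp (-(d:ℝ)*Γ) * (κ * (h^d)⁻¹) ≤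
        ∑ j, Kh (X i t - X j t) :=
      le_trans (mul_le_mul_of_nonneg_right hcard (by positivity)) hsum
    have heq : (N:ℝ)⁻¹ * (α * N * h^d * Real.exp (-(d:ℝ)*Γ) * (κ * (h^d)⁻¹)) =
        κ * α * Real.exp (-(d:ℝ)*Γ) := by
      field_simp
    calc κ * α * Real.exp (-(d:ℝ)*Γ) = _ := heq.symm
    _ ≤ (N : ℝ)⁻¹ * ∑ j, Kh (X i t - X j t) :=
      mul_le_mul_of_nonneg_left hstep (inv_nonneg.2 hNpos.le)
  have hqpos : (0:ℝ) < κ * α * Real.exp (-(d:ℝ)*Γ) := by positivity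
  have hterm : ∀ i, ((N : ℝ)⁻¹ * ∑ j, Kh (X i t - X j t))⁻¹ ≤
      Real.exp ((d:ℝ)*Γ) / (κ * α) := by
    intro i
    have h1 : ((N : ℝ)⁻¹ * ∑ j, Kh (X i t - X j t))⁻¹ ≤
        (κ * α * Real.exp (-(d:ℝ)*Γ))⁻¹ := inv_anti₀ hqpos (hlow i)
    refine h1.trans_eq ?_
    rw [show (-(d:ℝ)*Γ) = -((d:ℝ)*Γ) by ring, Real.exp_neg]
    have hε : Real.exp ((d:ℝ)*Γ) ≠ 0 := Real.exp_ne_zero _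
    field_simp
  calc (N : ℝ)⁻¹ * ∑ i, ((N : ℝ)⁻¹ * ∑ j, Kh (X i t - X j t))⁻¹
      ≤ (N : ℝ)⁻¹ * ∑ _i : Fin N, Real.exp ((d:ℝ)*Γ) / (κ * α) :=
        mul_le_mul_of_nonneg_left (Finset.sum_le_sum (fun i _ => hterm i))
          (inv_nonneg.2 hNpos.le)
  _ = Real.exp ((d:ℝ)*Γ) / (κ * α) := by
      rw [Finset.sum_const, Finset.card_univ, Fintype.card_fin, nsmul_eq_mul]
      field_simp
end

section
/- Self-interaction divergence identity (core computation in Theorem 3.1): fix i and the other centers x_j (j ≠ i), and define Φ : ℝ^d → ℝ^d by Φ(w) := ∇_z log( (1/N)[ K_h(z − w) + ∑_{j≠i} K_h(z − x_j) ] ) evaluated at z = w. Then the divergence of Φ at w = x_i equals (div_z s_x)(x_i) − Δ K_h(0) / ( N · q_x(x_i) ), where q_x(z) := (1/N) ∑_{j=1}^N K_h(z − x_j) and s_x := ∇ log q_x. -/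
open MeasureTheory Finset

/-- Divergence of a vector field on `ℝ^d`. -/
noncomputable def vdiv {d : ℕ} (f : EuclideanSpace ℝ (Fin d) → EuclideanSpace ℝ (Fin d))
    (x : EuclideanSpace ℝ (Fin d)) : ℝ :=
  ∑ i : Fin d, fderiv ℝ f x (EuclideanSpace.single i 1) i

/-- Laplacian of a scalar field on `ℝ^d`. -/
noncomputable def Lap {d : ℕ} (f : EuclideanSpace ℝ (Fin d) → ℝ)
    (x : EuclideanSpace ℝ (Fin d)) : ℝ :=
  ∑ i : Fin d,
    fderiv ℝ (fun w => fderiv ℝ f w (EuclideanSpace.single i 1)) x (EuclideanSpace.single i 1)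

section Aux
variable {d : ℕ}

lemma grad_comp (f : EuclideanSpace ℝ (Fin d) → ℝ) (z : EuclideanSpace ℝ (Fin d)) (k : Fin d) :
    gradient f z k = fderiv ℝ f z (EuclideanSpace.single k 1) := by
  have h : (inner ℝ (gradient f z) (EuclideanSpace.single k (1:ℝ)) : ℝ)
      = fderiv ℝ f z (EuclideanSpace.single k 1) := by
    rw [gradient]; exact InnerProductSpace.toDual_symm_apply
  rw [EuclideanSpace.inner_single_right, one_mul, conj_trivial] at h
  exact h

lemma fderiv_comp_proj (f : EuclideanSpace ℝ (Fin d) → EuclideanSpace ℝ (Fin d))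
    {a : EuclideanSpace ℝ (Fin d)} (hf : DifferentiableAt ℝ f a)
    (v : EuclideanSpace ℝ (Fin d)) (k : Fin d) :
    fderiv ℝ f a v k = fderiv ℝ (fun w => f w k) a v := by
  have h : (fun w => f w k) = (EuclideanSpace.proj (𝕜 := ℝ) k) ∘ f := rfl
  rw [h, fderiv_comp a (EuclideanSpace.proj (𝕜 := ℝ) k).differentiableAt hf,
    ContinuousLinearMap.fderiv]
  rfl

end Aux

/-- Self-interaction divergence identity (core computation in Theorem 3.1): with
`Φ(w)` the KDE score with the `i`-th center replaced by `w` and evaluated at `w`,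
`div Φ (xᵢ) = (div_z s_x)(xᵢ) − Δ K_h(0)/(N q_x(xᵢ))`. -/
theorem self_interaction_divergence_identity {d : ℕ}
    (Kh : EuclideanSpace ℝ (Fin d) → ℝ)
    (hKpos : ∀ u, 0 < Kh u) (hKeven : ∀ u, Kh (-u) = Kh u) (hKC2 : ContDiff ℝ 2 Kh)
    (N : ℕ) (hN : 0 < N) (x : Fin N → EuclideanSpace ℝ (Fin d)) (i : Fin N)
    (q : EuclideanSpace ℝ (Fin d) → ℝ)
    (hq : ∀ z, q z = (N : ℝ)⁻¹ * ∑ j, Kh (z - x j))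
    (sx : EuclideanSpace ℝ (Fin d) → EuclideanSpace ℝ (Fin d))
    (hsx : ∀ z, sx z = gradient (fun w => Real.log (q w)) z)
    (Φ : EuclideanSpace ℝ (Fin d) → EuclideanSpace ℝ (Fin d))
    (hΦ : ∀ w, Φ w = gradient (fun z => Real.log ((N : ℝ)⁻¹ *
      (Kh (z - w) + ∑ j ∈ univ.erase i, Kh (z - x j)))) w) :
    vdiv Φ (x i) = vdiv sx (x i) - Lap Kh 0 / (N * q (x i)) := by
  classical
  have hNne : (N : ℝ) ≠ 0 := Nat.cast_ne_zero.mpr hN.ne'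
  have hNinv : (0 : ℝ) < (N : ℝ)⁻¹ := by positivity
  have hKdiff : Differentiable ℝ Kh := hKC2.differentiable (by norm_num)
  set e : Fin d → EuclideanSpace ℝ (Fin d) := fun k => EuclideanSpace.single k 1 with he
  -- the gradient of Kh vanishes at 0
  have hdK0 : fderiv ℝ Kh 0 = 0 := by
    have hKn : (fun u : EuclideanSpace ℝ (Fin d) => Kh (-u)) = Kh := funext hKeven
    have h2 : HasFDerivAt (fun u : EuclideanSpace ℝ (Fin d) => Kh (-u))
        ((fderiv ℝ Kh 0).comp (-(ContinuousLinearMap.id ℝ (EuclideanSpace ℝ (Fin d))))) 0 :=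
      HasFDerivAt.comp 0 (by simpa using (hKdiff 0).hasFDerivAt)
        ((hasFDerivAt_id (0 : EuclideanSpace ℝ (Fin d))).neg)
    rw [hKn] at h2
    have h3 := h2.unique (hKdiff 0).hasFDerivAt
    ext v
    have h5 := ContinuousLinearMap.ext_iff.mp h3 v
    simp only [ContinuousLinearMap.comp_apply, ContinuousLinearMap.neg_apply,
      ContinuousLinearMap.coe_id', id_eq, map_neg] at h5
    simp only [ContinuousLinearMap.zero_apply]
    linarith
  -- translation rule
  have hKt : ∀ (b w : EuclideanSpace ℝ (Fin d)),
      HasFDerivAt (fun z => Kh (z - b)) (fderiv ℝ Kh (w - b)) w := by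
    intro b w
    have := HasFDerivAt.comp w (hKdiff (w - b)).hasFDerivAt ((hasFDerivAt_id w).sub_const b)
    simp at this
    exact this
  -- first derivative applied to e k, as a differentiable function
  have hdKapp : ∀ k, Differentiable ℝ
      (fun z : EuclideanSpace ℝ (Fin d) => fderiv ℝ Kh z (e k)) := by
    intro k
    have h1 : ContDiff ℝ 1 (fderiv ℝ Kh) := hKC2.fderiv_right (by norm_num)
    exact (ContinuousLinearMap.apply ℝ ℝ (e k)).differentiable.comp (h1.differentiable (by norm_num))
  have hterm : ∀ (k) (b : EuclideanSpace ℝ (Fin d)), Differentiable ℝ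
      (fun w : EuclideanSpace ℝ (Fin d) => fderiv ℝ Kh (w - b) (e k)) := by
    intro k b
    exact (hdKapp k).comp (differentiable_id.sub_const b)
  have hshift : ∀ k, fderiv ℝ (fun w => fderiv ℝ Kh (w - x i) (e k)) (x i) (e k)
      = fderiv ℝ (fun w => fderiv ℝ Kh w (e k)) 0 (e k) := by
    intro k
    have h1 : HasFDerivAt (fun w => fderiv ℝ Kh w (e k))
        (fderiv ℝ (fun w => fderiv ℝ Kh w (e k)) 0) 0 :=
      ((hdKapp k) 0).hasFDerivAt
    have h2 := HasFDerivAt.comp (f := fun w => w - x i) (x i)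
      (by simpa using h1) ((hasFDerivAt_id (x i)).sub_const (x i))
    rw [show (fun w => fderiv ℝ Kh (w - x i) (e k))
      = (fun w => fderiv ℝ Kh w (e k)) ∘ (fun w => w - x i) from rfl, h2.fderiv]
    simp
  set a := x i with ha
  set S := (univ : Finset (Fin N)).erase i with hS
  set c : EuclideanSpace ℝ (Fin d) → ℝ :=
    fun w => (N : ℝ)⁻¹ * (Kh 0 + ∑ j ∈ S, Kh (w - x j)) with hc
  set g : Fin d → EuclideanSpace ℝ (Fin d) → ℝ :=
    fun k w => (N : ℝ)⁻¹ * ∑ j ∈ S, fderiv ℝ Kh (w - x j) (e k) with hg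
  set G : Fin d → EuclideanSpace ℝ (Fin d) → ℝ :=
    fun k z => (N : ℝ)⁻¹ * ∑ j, fderiv ℝ Kh (z - x j) (e k) with hG
  have hcpos : ∀ w, 0 < c w := by
    intro w
    have h1 : 0 ≤ ∑ j ∈ S, Kh (w - x j) := Finset.sum_nonneg fun j _ => (hKpos _).le
    have h2 := hKpos (0 : EuclideanSpace ℝ (Fin d))
    rw [hc]; positivity
  have hqsplit : ∀ z, q z = (N : ℝ)⁻¹ * (Kh (z - x i) + ∑ j ∈ S, Kh (z - x j)) := by
    intro z
    rw [hq z, ← Finset.add_sum_erase _ _ (mem_univ i)]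
  have hqc : q a = c a := by
    rw [hqsplit a, hc]
    simp [sub_self, ha]
  have hqpos : 0 < q a := hqc ▸ hcpos a
  -- formula for Φ components
  have hΦk : ∀ w k, Φ w k = (c w)⁻¹ * g k w := by
    intro w k
    have hpw : HasFDerivAt
        (fun z => (N : ℝ)⁻¹ * (Kh (z - w) + ∑ j ∈ S, Kh (z - x j)))
        ((N : ℝ)⁻¹ • (fderiv ℝ Kh (w - w) + ∑ j ∈ S, fderiv ℝ Kh (w - x j))) w :=
      ((hKt w w).add (HasFDerivAt.fun_sum fun j _ => hKt (x j) w)).const_mul _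
    have hpos : 0 < (N : ℝ)⁻¹ * (Kh (w - w) + ∑ j ∈ S, Kh (w - x j)) := by
      have h1 : 0 ≤ ∑ j ∈ S, Kh (w - x j) := Finset.sum_nonneg fun j _ => (hKpos _).le
      have h2 := hKpos (w - w)
      positivity
    have hlog := (Real.hasDerivAt_log hpos.ne').comp_hasFDerivAt w hpw
    rw [hΦ w, grad_comp, show (fun z => Real.log ((N : ℝ)⁻¹ *
      (Kh (z - w) + ∑ j ∈ S, Kh (z - x j)))) = Real.log ∘ (fun z => (N : ℝ)⁻¹ *
      (Kh (z - w) + ∑ j ∈ S, Kh (z - x j))) from rfl, hlog.fderiv]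
    simp only [ContinuousLinearMap.coe_smul', Pi.smul_apply, ContinuousLinearMap.add_apply,
      ContinuousLinearMap.coe_sum', Finset.sum_apply, sub_self, hdK0,
      ContinuousLinearMap.zero_apply, zero_add, smul_eq_mul, hc, hg, he]
  -- formula for sx components
  have hsxk : ∀ z k, sx z k = (q z)⁻¹ * G k z := by
    intro z k
    have hpw : HasFDerivAt (fun z => (N : ℝ)⁻¹ * ∑ j, Kh (z - x j))
        ((N : ℝ)⁻¹ • ∑ j, fderiv ℝ Kh (z - x j)) z :=
      (HasFDerivAt.fun_sum fun j _ => hKt (x j) z).const_mul _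
    have hqe : (fun z => (N : ℝ)⁻¹ * ∑ j, Kh (z - x j)) = q := funext fun z => (hq z).symm
    rw [hqe] at hpw
    have hpos : 0 < q z := by
      rw [hqsplit z]
      have h1 : 0 ≤ ∑ j ∈ S, Kh (z - x j) := Finset.sum_nonneg fun j _ => (hKpos _).le
      have h2 := hKpos (z - x i)
      positivity
    have hlog := (Real.hasDerivAt_log hpos.ne').comp_hasFDerivAt z hpw
    rw [hsx z, grad_comp, show (fun w => Real.log (q w)) = Real.log ∘ q from rfl,
      hlog.fderiv]
    simp only [ContinuousLinearMap.coe_smul', Pi.smul_apply, ContinuousLinearMap.coe_sum',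
      Finset.sum_apply, smul_eq_mul, hq z, hG, he]
  -- derivatives of c and q at a coincide
  have hcF : HasFDerivAt c ((N : ℝ)⁻¹ • ∑ j ∈ S, fderiv ℝ Kh (a - x j)) a := by
    have h0 := ((hasFDerivAt_const (Kh 0) a).add
      (HasFDerivAt.sum fun j (_ : j ∈ S) => hKt (x j) a)).const_mul ((N : ℝ)⁻¹)
    simpa [hc] using h0
  have hqF : HasFDerivAt q ((N : ℝ)⁻¹ • ∑ j ∈ S, fderiv ℝ Kh (a - x j)) a := by
    have h0 : HasFDerivAt (fun z => (N : ℝ)⁻¹ * ∑ j, Kh (z - x j))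
        ((N : ℝ)⁻¹ • ∑ j, fderiv ℝ Kh (a - x j)) a :=
      (HasFDerivAt.fun_sum fun j _ => hKt (x j) a).const_mul _
    have hqe : (fun z => (N : ℝ)⁻¹ * ∑ j, Kh (z - x j)) = q := funext fun z => (hq z).symm
    rw [hqe] at h0
    have hsum : ∑ j, fderiv ℝ Kh (a - x j) = ∑ j ∈ S, fderiv ℝ Kh (a - x j) := by
      rw [← Finset.add_sum_erase _ _ (mem_univ i), ← ha, ← hS, sub_self, hdK0, zero_add]
    rwa [hsum] at h0
  -- differentiabilities
  have hgdiff : ∀ k, Differentiable ℝ (g k) := by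
    intro k
    exact ((Differentiable.fun_sum fun j _ => hterm k (x j)).const_mul _)
  have hGdiff : ∀ k, Differentiable ℝ (G k) := by
    intro k
    exact ((Differentiable.fun_sum fun j _ => hterm k (x j)).const_mul _)
  -- relation between G and g
  have hGg : ∀ k, G k = fun z => g k z + (N : ℝ)⁻¹ * fderiv ℝ Kh (z - x i) (e k) := by
    intro k
    funext z
    rw [hG, hg]
    simp only
    rw [← Finset.add_sum_erase _ _ (mem_univ i), ← hS]
    ring
  have hGga : ∀ k, G k a = g k a := by
    intro k
    rw [hGg k]
    simp [sub_self, hdK0, ha]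
  have hGgd : ∀ k, fderiv ℝ (G k) a (e k) = fderiv ℝ (g k) a (e k)
      + (N : ℝ)⁻¹ * fderiv ℝ (fun w => fderiv ℝ Kh w (e k)) 0 (e k) := by
    intro k
    rw [hGg k, ← hshift k]
    rw [fderiv_fun_add ((hgdiff k) a) (((hterm k (x i)).const_mul _) a)]
    rw [fderiv_const_mul ((hterm k (x i)) a)]
    simp [ha]
  -- the per-coordinate identity
  have hkey : ∀ k, fderiv ℝ (fun w => (c w)⁻¹ * g k w) a (e k)
      = fderiv ℝ (fun w => (q w)⁻¹ * G k w) a (e k)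
        - (q a)⁻¹ * ((N : ℝ)⁻¹ * fderiv ℝ (fun w => fderiv ℝ Kh w (e k)) 0 (e k)) := by
    intro k
    have hinvc : HasFDerivAt (fun w => (c w)⁻¹)
        ((-((c a) ^ 2)⁻¹) • ((N : ℝ)⁻¹ • ∑ j ∈ S, fderiv ℝ Kh (a - x j))) a :=
      (hasDerivAt_inv (hcpos a).ne').comp_hasFDerivAt a hcF
    have hinvq : HasFDerivAt (fun w => (q w)⁻¹)
        ((-((q a) ^ 2)⁻¹) • ((N : ℝ)⁻¹ • ∑ j ∈ S, fderiv ℝ Kh (a - x j))) a :=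
      (hasDerivAt_inv hqpos.ne').comp_hasFDerivAt a hqF
    have hm1 := (hinvc.fun_mul ((hgdiff k) a).hasFDerivAt).fderiv
    have hm2 := (hinvq.fun_mul ((hGdiff k) a).hasFDerivAt).fderiv
    rw [hm1, hm2]
    simp only [ContinuousLinearMap.add_apply, ContinuousLinearMap.coe_smul', Pi.smul_apply,
      smul_eq_mul, hGga k, hGgd k, hqc]
    ring
  -- put things together
  have hΦdiff : DifferentiableAt ℝ Φ a := by
    rw [differentiableAt_euclidean]
    intro k
    have : (fun w => Φ w k) = fun w => (c w)⁻¹ * g k w := funext fun w => hΦk w k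
    rw [this]
    exact (hcF.differentiableAt.inv (hcpos a).ne').mul ((hgdiff k) a)
  have hsxdiff : DifferentiableAt ℝ sx a := by
    rw [differentiableAt_euclidean]
    intro k
    have : (fun w => sx w k) = fun w => (q w)⁻¹ * G k w := funext fun w => hsxk w k
    rw [this]
    exact ((hqF.differentiableAt.inv hqpos.ne').mul ((hGdiff k) a))
  have hvdivΦ : vdiv Φ a = ∑ k, fderiv ℝ (fun w => (c w)⁻¹ * g k w) a (e k) := by
    rw [vdiv]
    refine Finset.sum_congr rfl fun k _ => ?_
    rw [fderiv_comp_proj Φ hΦdiff (e k) k,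
      show (fun w => Φ w k) = fun w => (c w)⁻¹ * g k w from funext fun w => hΦk w k]
  have hvdivsx : vdiv sx a = ∑ k, fderiv ℝ (fun w => (q w)⁻¹ * G k w) a (e k) := by
    rw [vdiv]
    refine Finset.sum_congr rfl fun k _ => ?_
    rw [fderiv_comp_proj sx hsxdiff (e k) k,
      show (fun w => sx w k) = fun w => (q w)⁻¹ * G k w from funext fun w => hsxk w k]
  rw [hvdivΦ, hvdivsx]
  have hLap : Lap Kh 0 = ∑ k, fderiv ℝ (fun w => fderiv ℝ Kh w (e k)) 0 (e k) := rfl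
  rw [Finset.sum_congr rfl fun k _ => hkey k, Finset.sum_sub_distrib]
  rw [← Finset.mul_sum, ← Finset.mul_sum, ← hLap]
  have : (q a)⁻¹ * ((N : ℝ)⁻¹ * Lap Kh 0) = Lap Kh 0 / (N * q a) := by
    rw [div_eq_mul_inv, mul_inv]
    ring
  rw [this]
end

section
/- Gradient of the sharp Laplace companion kernel: for the Laplace kernel K_h(u) = c h^{−d} exp(−‖u‖/h) and its companion L_h(u) := h(‖u‖ + h) K_h(u), the function L_h is differentiable at every u ∈ ℝ^d (including u = 0) with gradient ∇L_h(u) = −u · K_h(u). -/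
open Real Asymptotics InnerProductSpace

/-- Key estimate: `|(1+t) e^{-t} - 1| ≤ t²` for `t ≥ 0`. -/
lemma sharp_laplace_key (t : ℝ) (ht : 0 ≤ t) :
    |(1 + t) * Real.exp (-t) - 1| ≤ t ^ 2 := by
  have hpos : 0 < Real.exp (-t) := Real.exp_pos _
  have hub : (1 + t) * Real.exp (-t) ≤ 1 := by
    have h1 : t + 1 ≤ Real.exp t := Real.add_one_le_exp t
    have := mul_le_mul_of_nonneg_right h1 hpos.le
    rwa [← Real.exp_add, add_neg_cancel, Real.exp_zero, add_comm t 1] at this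
  have hlb : 1 - t ^ 2 ≤ (1 + t) * Real.exp (-t) := by
    have h1 : 1 - t ≤ Real.exp (-t) := by
      have := Real.add_one_le_exp (-t); linarith
    have h2 : 0 ≤ 1 + t := by linarith
    nlinarith [mul_le_mul_of_nonneg_left h1 h2]
  rw [abs_le]
  constructor <;> nlinarith

/-- Derivative of the one-dimensional profile `t ↦ h (t+h) C e^{-t/h}`. -/
lemma sharp_laplace_profile_deriv (h C : ℝ) (hh : 0 < h) (t : ℝ) :
    HasDerivAt (fun t : ℝ => h * (t + h) * (C * Real.exp (-t / h)))
      (-(C * t * Real.exp (-t / h))) t := by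
  have h1 : HasDerivAt (fun t : ℝ => h * (t + h)) h t := by
    simpa using (((hasDerivAt_id t).add_const h).const_mul h)
  have h2 : HasDerivAt (fun t : ℝ => C * Real.exp (-t / h))
      (C * (Real.exp (-t / h) * (-1 / h))) t := by
    have he : HasDerivAt (fun t : ℝ => Real.exp (-t / h))
        (Real.exp (-t / h) * (-1 / h)) t := by
      have hd : HasDerivAt (fun t : ℝ => -t / h) (-1 / h) t := by
        simpa [neg_div] using ((hasDerivAt_id t).neg.div_const h)
      exact (Real.hasDerivAt_exp (-t / h)).comp t hd
    exact he.const_mul C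
  have := h1.mul h2
  refine this.congr_deriv ?_
  field_simp
  ring

/-- Gradient of the sharp Laplace companion kernel: for the Laplace kernel
`K_h(u) = c h^{−d} exp(−‖u‖/h)` and its companion `L_h(u) = h(‖u‖+h) K_h(u)`,
`L_h` is differentiable everywhere (including the origin) with
`∇L_h(u) = −K_h(u) • u`. -/
theorem gradient_sharp_laplace_companion {d : ℕ} (hd : 1 ≤ d) (h c : ℝ)
    (hh : 0 < h) (hc : 0 < c) :
    ∀ u : EuclideanSpace ℝ (Fin d),
      HasGradientAt
        (fun v : EuclideanSpace ℝ (Fin d) =>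
          h * (‖v‖ + h) * (c * (h ^ d)⁻¹ * Real.exp (-‖v‖ / h)))
        (-(c * (h ^ d)⁻¹ * Real.exp (-‖u‖ / h)) • u) u := by
  intro u
  set C : ℝ := c * (h ^ d)⁻¹ with hC
  have hCpos : 0 < C := by positivity
  by_cases hu : u = 0
  · subst hu
    have hz : (-(C * Real.exp (-‖(0 : EuclideanSpace ℝ (Fin d))‖ / h)) • (0 : EuclideanSpace ℝ (Fin d))) = 0 := smul_zero _
    rw [hz, hasGradientAt_iff_hasFDerivAt, map_zero,
      hasFDerivAt_iff_isLittleO]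
    have hbound : ∀ v : EuclideanSpace ℝ (Fin d),
        ‖h * (‖v‖ + h) * (C * Real.exp (-‖v‖ / h)) -
          h * (‖(0 : EuclideanSpace ℝ (Fin d))‖ + h) * (C * Real.exp (-‖(0 : EuclideanSpace ℝ (Fin d))‖ / h))‖ ≤ C * ‖v‖ * ‖v‖ := by
      intro v
      have ht : 0 ≤ ‖v‖ / h := by positivity
      have hkey := sharp_laplace_key (‖v‖ / h) ht
      have hrw : h * (‖v‖ + h) * (C * Real.exp (-‖v‖ / h)) -
          h * (‖(0 : EuclideanSpace ℝ (Fin d))‖ + h) * (C * Real.exp (-‖(0 : EuclideanSpace ℝ (Fin d))‖ / h))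
          = C * h ^ 2 * ((1 + ‖v‖ / h) * Real.exp (-(‖v‖ / h)) - 1) := by
        simp only [norm_zero, zero_add, neg_zero, zero_div, Real.exp_zero, neg_div]
        field_simp
        ring
      rw [hrw, Real.norm_eq_abs, abs_mul, neg_div] at *
      have habs : |C * h ^ 2| = C * h ^ 2 := abs_of_pos (by positivity)
      rw [habs]
      calc C * h ^ 2 * |(1 + ‖v‖ / h) * Real.exp (-(‖v‖ / h)) - 1|
          ≤ C * h ^ 2 * ((‖v‖ / h) ^ 2) := by
            exact mul_le_mul_of_nonneg_left hkey (by positivity)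
        _ = C * ‖v‖ * ‖v‖ := by field_simp
    rw [Asymptotics.isLittleO_iff]
    intro ε hε
    filter_upwards [Metric.ball_mem_nhds (0 : EuclideanSpace ℝ (Fin d)) (show 0 < ε / C by positivity)] with v hv
    have hv' : ‖v‖ < ε / C := by simpa [dist_eq_norm] using hv
    simp only [ContinuousLinearMap.zero_apply, sub_zero]
    calc ‖h * (‖v‖ + h) * (C * Real.exp (-‖v‖ / h)) -
          h * (‖(0 : EuclideanSpace ℝ (Fin d))‖ + h) * (C * Real.exp (-‖(0 : EuclideanSpace ℝ (Fin d))‖ / h))‖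
        ≤ C * ‖v‖ * ‖v‖ := hbound v
      _ ≤ ε * ‖v‖ := by
          have : C * ‖v‖ ≤ ε := by
            calc C * ‖v‖ ≤ C * (ε / C) := mul_le_mul_of_nonneg_left hv'.le hCpos.le
              _ = ε := by field_simp
          exact mul_le_mul_of_nonneg_right this (norm_nonneg v)
  · -- u ≠ 0 : chain rule
    have hnu : (0 : ℝ) < ‖u‖ := norm_pos_iff.mpr hu
    have hsq : HasFDerivAt (fun v : EuclideanSpace ℝ (Fin d) => ‖v‖ ^ 2) (2 • innerSL ℝ u) u :=
      (hasStrictFDerivAt_norm_sq u).hasFDerivAt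
    have hsqrt : HasDerivAt Real.sqrt (1 / (2 * Real.sqrt (‖u‖ ^ 2))) (‖u‖ ^ 2) :=
      Real.hasDerivAt_sqrt (by positivity)
    have hnorm' : HasFDerivAt (fun v : EuclideanSpace ℝ (Fin d) => Real.sqrt (‖v‖ ^ 2))
        ((1 / (2 * Real.sqrt (‖u‖ ^ 2))) • (2 • innerSL ℝ u)) u :=
      hsqrt.comp_hasFDerivAt u hsq
    have hfun : (fun v : EuclideanSpace ℝ (Fin d) => Real.sqrt (‖v‖ ^ 2)) = fun v : EuclideanSpace ℝ (Fin d) => ‖v‖ := by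
      funext v; exact Real.sqrt_sq (norm_nonneg v)
    have hsc : ((1 / (2 * Real.sqrt (‖u‖ ^ 2))) • (2 • innerSL ℝ u))
        = (‖u‖⁻¹ • innerSL ℝ u : EuclideanSpace ℝ (Fin d) →L[ℝ] ℝ) := by
      ext y
      simp only [Real.sqrt_sq (norm_nonneg u), ContinuousLinearMap.smul_apply, smul_eq_mul,
        ContinuousLinearMap.coe_smul', Pi.smul_apply, nsmul_eq_mul, Nat.cast_ofNat]
      field_simp
    have hnorm : HasFDerivAt (fun v : EuclideanSpace ℝ (Fin d) => ‖v‖) (‖u‖⁻¹ • innerSL ℝ u) u := by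
      rw [← hfun, ← hsc]; exact hnorm'
    have hprof := sharp_laplace_profile_deriv h C hh ‖u‖
    have hcomp : HasFDerivAt
        (fun v : EuclideanSpace ℝ (Fin d) => h * (‖v‖ + h) * (C * Real.exp (-‖v‖ / h)))
        ((-(C * ‖u‖ * Real.exp (-‖u‖ / h))) • (‖u‖⁻¹ • innerSL ℝ u)) u :=
      hprof.comp_hasFDerivAt u hnorm
    have hfinal : ((-(C * ‖u‖ * Real.exp (-‖u‖ / h))) • (‖u‖⁻¹ • innerSL ℝ u) : EuclideanSpace ℝ (Fin d) →L[ℝ] ℝ)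
        = toDual ℝ (EuclideanSpace ℝ (Fin d)) ((-(C * Real.exp (-‖u‖ / h))) • u) := by
      ext y
      simp only [ContinuousLinearMap.smul_apply, innerSL_apply_apply, toDual_apply_apply,
        real_inner_smul_left, smul_eq_mul]
      field_simp
    rw [hasGradientAt_iff_hasFDerivAt, ← hfinal]
    exact hcomp
end

section
/- Sharp-score representation of the Laplace mean-shift field (Lemma 6.1): for any Borel probability measure α on ℝ^d and any z ∈ ℝ^d, the function R(z) := ∫ L_h(z − y) dα(y) is differentiable with ∇R(z) = ∫ (y − z) K_h(z − y) dα(y); consequently, writing Q(z) := ∫ K_h(z − y) dα(y) > 0 and R(z) > 0, the mean-shift vector M(z) := ( ∫ (y − z) K_h(z − y) dα(y) ) / Q(z) satisfies M(z) = (R(z)/Q(z)) · ∇ log R(z); moreover R(z)/Q(z) = h ( r̄(z) + h ), where r̄(z) := ( ∫ ‖y − z‖ K_h(z − y) dα(y) ) / Q(z). -/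
open MeasureTheory

section Aux

open Real

/-- `r e^{-r/h} ≤ h` for `r ≥ 0`. -/
lemma aux_mul_exp_le {h : ℝ} (hh : 0 < h) {r : ℝ} (hr : 0 ≤ r) :
    r * Real.exp (-r / h) ≤ h := by
  have h1 : r / h + 1 ≤ Real.exp (r / h) := Real.add_one_le_exp _
  have h2 : r + h ≤ h * Real.exp (r / h) := by
    have := mul_le_mul_of_nonneg_left h1 hh.le
    field_simp at this
    linarith
  have h3 : (0:ℝ) < Real.exp (r / h) := Real.exp_pos _
  rw [neg_div, Real.exp_neg]
  rw [mul_inv_le_iff₀ h3]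
  nlinarith

/-- `(r+h) e^{-r/h} ≤ 2h` for `r ≥ 0`. -/
lemma aux_add_mul_exp_le {h : ℝ} (hh : 0 < h) {r : ℝ} (hr : 0 ≤ r) :
    (r + h) * Real.exp (-r / h) ≤ 2 * h := by
  have h1 := aux_mul_exp_le hh hr
  have h2 : Real.exp (-r / h) ≤ 1 := by
    rw [Real.exp_le_one_iff]
    have : 0 ≤ r / h := div_nonneg hr hh.le
    rw [neg_div]; linarith
  have h3 : (0:ℝ) < Real.exp (-r / h) := Real.exp_pos _
  nlinarith

/-- Derivative of the radial profile `s ↦ h (s+h) c' e^{-s/h}`. -/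
lemma aux_phi_deriv (h c' : ℝ) (hh : h ≠ 0) (r : ℝ) :
    HasDerivAt (fun s : ℝ => h * (s + h) * (c' * Real.exp (-s / h)))
      (-(r * (c' * Real.exp (-r / h)))) r := by
  have h1 : HasDerivAt (fun s : ℝ => h * (s + h)) h r := by
    simpa using ((hasDerivAt_id r).add_const h).const_mul h
  have h2 : HasDerivAt (fun s : ℝ => -s / h) (-1 / h) r := by
    simpa using ((hasDerivAt_id r).neg).div_const h
  have h3 : HasDerivAt (fun s : ℝ => c' * Real.exp (-s / h))
      (c' * (Real.exp (-r / h) * (-1 / h))) r := (h2.exp).const_mul c'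
  have := h1.mul h3
  refine this.congr_deriv ?_
  field_simp
  ring

/-- Gradient of the norm at a nonzero point of a real inner product space. -/
lemma aux_norm_fderiv {d : ℕ} {x : EuclideanSpace ℝ (Fin d)} (hx : x ≠ 0) :
    HasFDerivAt (fun y : EuclideanSpace ℝ (Fin d) => ‖y‖) (innerSL ℝ (‖x‖⁻¹ • x)) x := by
  have hx' : ‖x‖ ≠ 0 := norm_ne_zero_iff.mpr hx
  have hsq : HasFDerivAt (fun y : EuclideanSpace ℝ (Fin d) => ‖y‖ ^ 2)
      (2 • (innerSL ℝ x)) x := (hasStrictFDerivAt_norm_sq x).hasFDerivAt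
  have hsqrt : HasDerivAt Real.sqrt (1 / (2 * Real.sqrt (‖x‖ ^ 2))) (‖x‖ ^ 2) :=
    Real.hasDerivAt_sqrt (by positivity)
  have hcomp := hsqrt.comp_hasFDerivAt x hsq
  have heq : (fun y : EuclideanSpace ℝ (Fin d) => Real.sqrt (‖y‖ ^ 2)) =
      fun y : EuclideanSpace ℝ (Fin d) => ‖y‖ := by
    funext y
    rw [Real.sqrt_sq (norm_nonneg y)]
  have : HasFDerivAt (fun y : EuclideanSpace ℝ (Fin d) => ‖y‖)
      ((1 / (2 * Real.sqrt (‖x‖ ^ 2))) • (2 • (innerSL ℝ x))) x := by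
    have := hcomp
    rwa [show Real.sqrt ∘ (fun y : EuclideanSpace ℝ (Fin d) => ‖y‖ ^ 2) =
      fun y : EuclideanSpace ℝ (Fin d) => ‖y‖ from funext fun y => Real.sqrt_sq (norm_nonneg y)]
      at this
  refine this.congr_fderiv ?_
  ext w
  rw [Real.sqrt_sq (norm_nonneg x)]
  simp only [ContinuousLinearMap.smul_apply, ContinuousLinearMap.coe_smul', Pi.smul_apply,
    innerSL_apply_apply, real_inner_smul_left, smul_eq_mul]
  field_simp
  ring

/-- Pointwise gradient of the sharp companion kernel profile. -/
lemma aux_grad {d : ℕ} (h c' : ℝ) (hh : 0 < h) (hc' : 0 < c') (u : EuclideanSpace ℝ (Fin d)) :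
    HasFDerivAt (fun w : EuclideanSpace ℝ (Fin d) => h * (‖w‖ + h) * (c' * Real.exp (-‖w‖ / h)))
      (innerSL ℝ ((-(c' * Real.exp (-‖u‖ / h))) • u)) u := by
  by_cases hu : u = 0
  · subst hu
    have hzero : (innerSL ℝ ((-(c' * Real.exp (-‖(0 : EuclideanSpace ℝ (Fin d))‖ / h)))
        • (0 : EuclideanSpace ℝ (Fin d)))) = 0 := by simp
    rw [hzero]
    rw [hasFDerivAt_iff_isLittleO_nhds_zero]
    have key : ∀ w : EuclideanSpace ℝ (Fin d),
        |h * (‖w‖ + h) * (c' * Real.exp (-‖w‖ / h)) -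
          h * (‖(0 : EuclideanSpace ℝ (Fin d))‖ + h) *
            (c' * Real.exp (-‖(0 : EuclideanSpace ℝ (Fin d))‖ / h))| ≤ c' * ‖w‖ ^ 2 := by
      intro w
      have hr : (0:ℝ) ≤ ‖w‖ := norm_nonneg w
      set r := ‖w‖ with hrdef
      simp only [norm_zero, neg_zero, zero_div, Real.exp_zero]
      have hE : (0:ℝ) < Real.exp (-r / h) := Real.exp_pos _
      have hup : (r + h) * Real.exp (-r / h) ≤ h := by
        have h1 : r / h + 1 ≤ Real.exp (r / h) := Real.add_one_le_exp _
        have h2 : r + h ≤ h * Real.exp (r / h) := by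
          have := mul_le_mul_of_nonneg_left h1 hh.le
          field_simp at this
          linarith
        have h4 : Real.exp (r / h) * Real.exp (-r / h) = 1 := by
          rw [← Real.exp_add, show r / h + -r / h = 0 by ring, Real.exp_zero]
        nlinarith
      have hlow : h - r ^ 2 / h ≤ (r + h) * Real.exp (-r / h) := by
        have h1 : -r / h + 1 ≤ Real.exp (-r / h) := Real.add_one_le_exp _
        have h2 : (r + h) * (-r / h + 1) ≤ (r + h) * Real.exp (-r / h) :=
          mul_le_mul_of_nonneg_left h1 (by linarith)
        have h3 : (r + h) * (-r / h + 1) = h - r ^ 2 / h := by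
          field_simp
          ring
        linarith
      have e1 : h * ((r + h) * Real.exp (-r / h)) ≤ h * h :=
        mul_le_mul_of_nonneg_left hup hh.le
      have e2 : h * h - r ^ 2 ≤ h * ((r + h) * Real.exp (-r / h)) := by
        have e3 := mul_le_mul_of_nonneg_left hlow hh.le
        have e4 : h * (h - r ^ 2 / h) = h * h - r ^ 2 := by field_simp
        linarith
      have expr : h * (r + h) * (c' * Real.exp (-r / h)) - h * (0 + h) * (c' * 1) =
          c' * (h * ((r + h) * Real.exp (-r / h)) - h * h) := by ring
      rw [expr, abs_le]
      have hX1 : h * ((r + h) * Real.exp (-r / h)) - h * h ≤ 0 := by linarith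
      have hX2 : -(r ^ 2) ≤ h * ((r + h) * Real.exp (-r / h)) - h * h := by linarith
      constructor
      · have e5 := mul_le_mul_of_nonneg_left hX2 hc'.le
        have e6 : c' * (-(r ^ 2)) = -(c' * r ^ 2) := by ring
        linarith
      · have e5 := mul_le_mul_of_nonneg_left hX1 hc'.le
        have e6 : (0:ℝ) ≤ c' * r ^ 2 := by positivity
        linarith
    rw [Asymptotics.isLittleO_iff]
    intro ε hε
    have hball : Metric.ball (0 : EuclideanSpace ℝ (Fin d)) (ε / c') ∈
        nhds (0 : EuclideanSpace ℝ (Fin d)) := Metric.ball_mem_nhds _ (by positivity)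
    filter_upwards [hball] with w hw
    simp only [Metric.mem_ball, dist_zero_right] at hw
    have h1 := key w
    simp only [zero_add, ContinuousLinearMap.zero_apply, sub_zero]
    have hw' : ‖w‖ * c' < ε := (lt_div_iff₀ hc').mp hw
    have h2 : c' * ‖w‖ ^ 2 ≤ ε * ‖w‖ := by nlinarith [norm_nonneg w]
    rw [Real.norm_eq_abs]
    exact h1.trans h2
  · have hn : ‖u‖ ≠ 0 := norm_ne_zero_iff.mpr hu
    have hφ := aux_phi_deriv h c' hh.ne' ‖u‖
    have hnorm := aux_norm_fderiv (d := d) hu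
    have hcomp := hφ.comp_hasFDerivAt u hnorm
    refine hcomp.congr_fderiv ?_
    ext w
    simp only [ContinuousLinearMap.smul_apply, innerSL_apply_apply, real_inner_smul_left, smul_eq_mul]
    field_simp

end Aux

/-- Sharp-score representation of the Laplace mean-shift field (Lemma 6.1):
`R(z) = ∫ L_h(z−y) dα(y)` is differentiable with `∇R(z) = ∫ (y−z)K_h(z−y) dα(y)`,
the mean-shift vector satisfies `M(z) = (R(z)/Q(z)) ∇ log R(z)`, and
`R(z)/Q(z) = h(r̄(z)+h)`. -/
theorem sharp_score_representation_laplace {d : ℕ} (h c : ℝ) (hh : 0 < h) (hc : 0 < c)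
    (α : Measure (EuclideanSpace ℝ (Fin d))) [IsProbabilityMeasure α]
    (Kh Lh : EuclideanSpace ℝ (Fin d) → ℝ)
    (hKh : ∀ u, Kh u = c * (h ^ d)⁻¹ * Real.exp (-‖u‖ / h))
    (hLh : ∀ u, Lh u = h * (‖u‖ + h) * Kh u)
    (R Q : EuclideanSpace ℝ (Fin d) → ℝ)
    (hR : ∀ z, R z = ∫ y, Lh (z - y) ∂α)
    (hQ : ∀ z, Q z = ∫ y, Kh (z - y) ∂α)
    (M : EuclideanSpace ℝ (Fin d) → EuclideanSpace ℝ (Fin d))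
    (hM : ∀ z, M z = (Q z)⁻¹ • ∫ y, Kh (z - y) • (y - z) ∂α)
    (rbar : EuclideanSpace ℝ (Fin d) → ℝ)
    (hrbar : ∀ z, rbar z = (∫ y, ‖y - z‖ * Kh (z - y) ∂α) / Q z) :
    ∀ z,
      HasGradientAt R (∫ y, Kh (z - y) • (y - z) ∂α) z ∧
      M z = (R z / Q z) • gradient (fun w => Real.log (R w)) z ∧
      R z / Q z = h * (rbar z + h) := by
  intro z
  set c' : ℝ := c * (h ^ d)⁻¹ with hc'def
  have hc' : 0 < c' := by positivity
  -- basic pointwise facts about the kernels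
  have hkpos : ∀ u : (EuclideanSpace ℝ (Fin d)), 0 < Kh u := by
    intro u; rw [hKh]; positivity
  have hkle : ∀ u : (EuclideanSpace ℝ (Fin d)), Kh u ≤ c' := by
    intro u
    rw [hKh]
    have h1 : Real.exp (-‖u‖ / h) ≤ 1 := by
      rw [Real.exp_le_one_iff, neg_div]
      have : 0 ≤ ‖u‖ / h := div_nonneg (norm_nonneg u) hh.le
      linarith
    nlinarith
  have hLpos : ∀ u : (EuclideanSpace ℝ (Fin d)), 0 < Lh u := by
    intro u
    rw [hLh]
    have : (0:ℝ) < ‖u‖ + h := by have := norm_nonneg u; linarith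
    exact mul_pos (mul_pos hh this) (hkpos u)
  have hLbound : ∀ u : (EuclideanSpace ℝ (Fin d)), ‖Lh u‖ ≤ c' * (2 * h ^ 2) := by
    intro u
    rw [Real.norm_eq_abs, abs_of_nonneg (hLpos u).le, hLh, hKh]
    have h1 := aux_add_mul_exp_le hh (norm_nonneg u)
    have h2 := mul_le_mul_of_nonneg_left h1 (by positivity : (0:ℝ) ≤ c' * h)
    have h3 : h * (‖u‖ + h) * (c' * Real.exp (-‖u‖ / h)) =
        c' * h * ((‖u‖ + h) * Real.exp (-‖u‖ / h)) := by ring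
    nlinarith
  have hnkbound : ∀ u : (EuclideanSpace ℝ (Fin d)), ‖u‖ * Kh u ≤ c' * h := by
    intro u
    rw [hKh]
    have h1 := aux_mul_exp_le hh (norm_nonneg u)
    nlinarith [Real.exp_pos (-‖u‖ / h), norm_nonneg u]
  -- continuity
  have hKfun : Kh = fun u : (EuclideanSpace ℝ (Fin d)) => c' * Real.exp (-‖u‖ / h) := funext hKh
  have hKc : Continuous Kh := by
    rw [hKfun]
    exact continuous_const.mul (Real.continuous_exp.comp ((continuous_norm.neg).div_const h))
  have hLc : Continuous Lh := by
    have : Lh = fun u : (EuclideanSpace ℝ (Fin d)) => h * (‖u‖ + h) * Kh u := funext hLh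
    rw [this]
    exact (continuous_const.mul (continuous_norm.add continuous_const)).mul hKc
  -- integrability
  have aux_int : ∀ {G : Type} [NormedAddCommGroup G] [NormedSpace ℝ G]
      (f : (EuclideanSpace ℝ (Fin d)) → G), Continuous f → ∀ C : ℝ, (∀ y, ‖f y‖ ≤ C) → Integrable f α := by
    intro G _ _ f hf C hC
    exact (integrable_const C).mono' hf.aestronglyMeasurable (Filter.Eventually.of_forall hC)
  have int_L : ∀ x : (EuclideanSpace ℝ (Fin d)), Integrable (fun y => Lh (x - y)) α := by
    intro x
    exact aux_int _ (hLc.comp (continuous_const.sub continuous_id)) (c' * (2 * h ^ 2))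
      (fun y => hLbound _)
  have int_k : Integrable (fun y => Kh (z - y)) α := by
    refine aux_int _ (hKc.comp (continuous_const.sub continuous_id)) c' (fun y => ?_)
    rw [Real.norm_eq_abs, abs_of_nonneg (hkpos _).le]
    exact hkle _
  have int_nk : Integrable (fun y => ‖y - z‖ * Kh (z - y)) α := by
    refine aux_int _ (((continuous_id.sub continuous_const).norm).mul
      (hKc.comp (continuous_const.sub continuous_id))) (c' * h) (fun y => ?_)
    rw [Real.norm_eq_abs, abs_of_nonneg (mul_nonneg (norm_nonneg _) (hkpos _).le)]
    rw [show ‖y - z‖ = ‖z - y‖ from norm_sub_rev y z]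
    exact hnkbound _
  have hveccont : Continuous (fun y : (EuclideanSpace ℝ (Fin d)) => Kh (z - y) • (y - z)) :=
    (hKc.comp (continuous_const.sub continuous_id)).smul
      (continuous_id.sub continuous_const)
  have int_vec : Integrable (fun y : (EuclideanSpace ℝ (Fin d)) => Kh (z - y) • (y - z)) α := by
    refine aux_int _ hveccont (c' * h) (fun y => ?_)
    rw [norm_smul, Real.norm_eq_abs, abs_of_nonneg (hkpos _).le,
      show ‖y - z‖ = ‖z - y‖ from norm_sub_rev y z, mul_comm]
    exact hnkbound _
  -- pointwise derivative of the translated companion kernel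
  have hptws : ∀ (y x : (EuclideanSpace ℝ (Fin d))), HasFDerivAt (fun w => Lh (w - y))
      (innerSL ℝ (Kh (x - y) • (y - x))) x := by
    intro y x
    have h1 := aux_grad h c' hh hc' (x - y)
    have h2 : HasFDerivAt (fun w : (EuclideanSpace ℝ (Fin d)) => w - y) (ContinuousLinearMap.id ℝ (EuclideanSpace ℝ (Fin d))) x := by
      simpa using (hasFDerivAt_id x).sub_const y
    have h3 := h1.comp x h2
    have hfun : ((fun w : (EuclideanSpace ℝ (Fin d)) => h * (‖w‖ + h) * (c' * Real.exp (-‖w‖ / h))) ∘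
        (fun w : (EuclideanSpace ℝ (Fin d)) => w - y)) = fun w : (EuclideanSpace ℝ (Fin d)) => Lh (w - y) := by
      funext w
      simp only [Function.comp]
      rw [hLh, hKh]
    have hmap : (innerSL ℝ ((-(c' * Real.exp (-‖x - y‖ / h))) • (x - y))).comp
        (ContinuousLinearMap.id ℝ (EuclideanSpace ℝ (Fin d))) = innerSL ℝ (Kh (x - y) • (y - x)) := by
      rw [ContinuousLinearMap.comp_id]
      congr 1
      rw [hKh, show y - x = -(x - y) from (neg_sub x y).symm, smul_neg, neg_smul]
    rw [hfun, hmap] at h3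
    exact h3
  -- differentiation under the integral sign
  have hmain : HasFDerivAt (fun x => ∫ y, Lh (x - y) ∂α)
      (∫ y, innerSL ℝ (Kh (z - y) • (y - z)) ∂α) z := by
    refine hasFDerivAt_integral_of_dominated_of_fderiv_le (s := Metric.ball z 1)
      (F := fun x y => Lh (x - y))
      (F' := fun (x y : EuclideanSpace ℝ (Fin d)) => innerSL ℝ (Kh (x - y) • (y - x)))
      (bound := fun _ => c' * h) (Metric.ball_mem_nhds z one_pos) ?_ ?_ ?_ ?_ ?_ ?_
    · exact Filter.Eventually.of_forall
        (fun x => (hLc.comp (continuous_const.sub continuous_id)).aestronglyMeasurable)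
    · exact int_L z
    · exact ((innerSL ℝ).continuous.comp hveccont).aestronglyMeasurable
    · refine Filter.Eventually.of_forall (fun y => fun x _ => ?_)
      rw [innerSL_apply_norm, norm_smul, Real.norm_eq_abs, abs_of_nonneg (hkpos _).le,
        show ‖y - x‖ = ‖x - y‖ from norm_sub_rev y x, mul_comm]
      exact hnkbound _
    · exact integrable_const _
    · exact Filter.Eventually.of_forall (fun y => fun x _ => hptws y x)
  set G : (EuclideanSpace ℝ (Fin d)) := ∫ y, Kh (z - y) • (y - z) ∂α with hGdef
  have hswap : (∫ y, innerSL ℝ (Kh (z - y) • (y - z)) ∂α) = innerSL ℝ G :=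
    ContinuousLinearMap.integral_comp_comm (innerSL ℝ) int_vec
  have htoDual : ∀ v : (EuclideanSpace ℝ (Fin d)), InnerProductSpace.toDual ℝ (EuclideanSpace ℝ (Fin d)) v = innerSL ℝ v := by
    intro v
    ext w
    rw [InnerProductSpace.toDual_apply_apply, innerSL_apply_apply]
  have hgrad : HasGradientAt R G z := by
    rw [hasGradientAt_iff_hasFDerivAt]
    have hRfun : R = fun x => ∫ y, Lh (x - y) ∂α := funext hR
    rw [hRfun, htoDual, ← hswap]
    exact hmain
  -- positivity
  have hQpos : 0 < Q z := by
    rw [hQ]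
    rw [integral_pos_iff_support_of_nonneg (fun y => (hkpos _).le) int_k]
    have : Function.support (fun y : (EuclideanSpace ℝ (Fin d)) => Kh (z - y)) = Set.univ :=
      Set.eq_univ_of_forall fun y => (hkpos _).ne'
    rw [this, measure_univ]
    exact zero_lt_one
  have hRpos : 0 < R z := by
    rw [hR]
    rw [integral_pos_iff_support_of_nonneg (fun y => (hLpos _).le) (int_L z)]
    have : Function.support (fun y : (EuclideanSpace ℝ (Fin d)) => Lh (z - y)) = Set.univ :=
      Set.eq_univ_of_forall fun y => (hLpos _).ne'
    rw [this, measure_univ]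
    exact zero_lt_one
  refine ⟨hgrad, ?_, ?_⟩
  · -- mean-shift identity
    have hlogF := (Real.hasDerivAt_log hRpos.ne').comp_hasFDerivAt z hgrad.hasFDerivAt
    have hloggrad : HasGradientAt (fun w => Real.log (R w)) ((R z)⁻¹ • G) z := by
      rw [hasGradientAt_iff_hasFDerivAt]
      rw [htoDual ((R z)⁻¹ • G), _root_.map_smul, ← htoDual G]
      exact hlogF
    rw [hM, hloggrad.gradient, smul_smul]
    congr 1
    field_simp
  · -- ratio identity
    have hsplit : ∀ y : (EuclideanSpace ℝ (Fin d)), Lh (z - y) =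
        h * (‖y - z‖ * Kh (z - y)) + h ^ 2 * Kh (z - y) := by
      intro y
      rw [hLh, norm_sub_rev]
      ring
    have hRz : R z = h * (∫ y, ‖y - z‖ * Kh (z - y) ∂α) + h ^ 2 * Q z := by
      rw [hR, hQ]
      rw [integral_congr_ae (Filter.Eventually.of_forall hsplit)]
      rw [integral_add (int_nk.const_mul h) (int_k.const_mul (h ^ 2)),
        integral_const_mul, integral_const_mul]
    rw [hrbar, hRz]
    field_simp
end
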